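/- arXiv:2302.13686 — 3 statements merged into one kernel-verified Lean document; each statement's English description precedes it below -/
import Mathlib

section
/- Let I = {0,1}, let A be the affine Cartan matrix of type A_1^{(1)} (a_{00} = a_{11} = 2, a_{01} = a_{10} = -2), and set q_0 = q_1 = p. Then a pair (φ_0, φ_1) ∈ 𝒜 × 𝒜 satisfies the shiftability system for A if and only if there exists b ∈ ℂ^× such that φ_0 = {p·b·x_0 x_1^{-1}}·{b·x_0^{-1} x_1} and φ_1 = {p·b·x_0^{-1} x_1}·{b·x_0 x_1^{-1}}. -/
noncomputable section

/-- The Laurent polynomial algebra `ℂ[x_i^{±1} : i ∈ ι]`, realized as the group algebra of the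
free abelian group `ι → ℤ` over `ℂ` (for `ι` finite this is `ℤ^ι`). -/
abbrev LaurentAlg (ι : Type*) : Type _ := AddMonoidAlgebra ℂ (ι → ℤ)

/-- The monomial `∏_i x_i^{μ i}`. -/
def mono {ι : Type*} (μ : ι → ℤ) : LaurentAlg ι := AddMonoidAlgebra.single μ 1

lemma mono_zero {ι : Type*} : mono (0 : ι → ℤ) = 1 := rfl

lemma mono_add {ι : Type*} (μ ν : ι → ℤ) : mono (μ + ν) = mono μ * mono ν := by
  simp [mono, AddMonoidAlgebra.single_mul_single]

/-- The auxiliary monoid homomorphism `μ ↦ c^{-μ i} · x^μ` underlying `ζ_i`. -/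
def zetaHom {ι : Type*} (c : ℂˣ) (i : ι) : Multiplicative (ι → ℤ) →* LaurentAlg ι where
  toFun μ := ((c ^ (-(Multiplicative.toAdd μ i)) : ℂˣ) : ℂ) • mono (Multiplicative.toAdd μ)
  map_one' := by
    simp [mono_zero]
  map_mul' μ ν := by
    show ((c ^ (-(Multiplicative.toAdd (μ * ν) i)) : ℂˣ) : ℂ) • mono (Multiplicative.toAdd (μ * ν)) = _
    have h : Multiplicative.toAdd (μ * ν) = Multiplicative.toAdd μ + Multiplicative.toAdd ν := rfl
    rw [h, mono_add, Pi.add_apply, neg_add, zpow_add, Units.val_mul, mul_smul,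
      smul_mul_assoc, mul_smul_comm]

/-- The `ℂ`-algebra endomorphism `ζ_i` of the Laurent polynomial algebra determined by
`ζ_i(x_j) = c^{-δ_{ij}} x_j` (its inverse automorphism is `zeta c⁻¹ i`). -/
def zeta {ι : Type*} (c : ℂˣ) (i : ι) : LaurentAlg ι →ₐ[ℂ] LaurentAlg ι :=
  AddMonoidAlgebra.lift ℂ (LaurentAlg ι) (ι → ℤ) (zetaHom c i)

/-- The element `{u}_s = (u - u⁻¹)/(s - s⁻¹)` for the unit `u = c · x^μ` of the Laurent
polynomial algebra (whose inverse is `c⁻¹ · x^{-μ}`). -/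
def brk {ι : Type*} (s c : ℂ) (μ : ι → ℤ) : LaurentAlg ι :=
  ((s - s⁻¹)⁻¹ : ℂ) • (c • mono μ - c⁻¹ • mono (-μ))

/-- The shiftability system (4.1) for the integer matrix `a` with parameters `q i`:
`ζ_i(φ_i) − φ_i = {y_i}_i` for all `i`, and `φ_i φ_j = ζ_j^{-1}(φ_i)·ζ_i^{-1}(φ_j)` for `i ≠ j`,
where `y_i = ∏_j x_j^{a j i}`. -/
def ShiftSystem {ι : Type*} (a : ι → ι → ℤ) (q : ι → ℂˣ) (φ : ι → LaurentAlg ι) : Prop :=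
  (∀ i, zeta (q i) i (φ i) - φ i = brk ((q i : ℂ)) 1 (fun j => a j i)) ∧
  (∀ i j, i ≠ j → φ i * φ j = zeta (q j)⁻¹ j (φ i) * zeta (q i)⁻¹ i (φ j))

/-- The exponent vector of the single variable `x_k`. -/
def xvec {ι : Type*} [DecidableEq ι] (k : ι) : ι → ℤ := fun j => if j = k then 1 else 0

end

noncomputable section

noncomputable section AuxShift

instance {ι : Type*} : CoeFun (LaurentAlg ι) (fun _ => (ι → ℤ) → ℂ) := ⟨fun f => f.coeff⟩

-- ===================== aux =====================

lemma zeta_single {ι : Type*} (c : ℂˣ) (i : ι) (μ : ι → ℤ) (r : ℂ) :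
    zeta c i (AddMonoidAlgebra.single μ r) =
      AddMonoidAlgebra.single μ (((c ^ (-(μ i)) : ℂˣ) : ℂ) * r) := by
  rw [zeta, AddMonoidAlgebra.lift_single]
  show r • (((c ^ (-(μ i)) : ℂˣ) : ℂ) • mono μ) = _
  rw [smul_smul, mono, AddMonoidAlgebra.smul_single, smul_eq_mul, mul_one, mul_comm]

lemma zeta_apply {ι : Type*} (c : ℂˣ) (i : ι) (φ : LaurentAlg ι) (μ : ι → ℤ) :
    zeta c i φ μ = ((c ^ (-(μ i)) : ℂˣ) : ℂ) * φ μ := by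
  induction φ using AddMonoidAlgebra.induction_linear with
  | zero => simp
  | add f g hf hg => rw [map_add, AddMonoidAlgebra.coeff_add, Finsupp.add_apply, hf, hg, AddMonoidAlgebra.coeff_add, Finsupp.add_apply, mul_add]
  | single ν r =>
      classical
      rw [zeta_single, AddMonoidAlgebra.coeff_single, AddMonoidAlgebra.coeff_single, Finsupp.single_apply, Finsupp.single_apply]
      split_ifs with h
      · subst h; rfl
      · simp

lemma vec2_eq {a b : Fin 2 → ℤ} (h0 : a 0 = b 0) (h1 : a 1 = b 1) : a = b := by
  funext j; fin_cases j <;> assumption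

lemma brk_eq {ι : Type*} (s c : ℂ) (μ : ι → ℤ) :
    brk s c μ = AddMonoidAlgebra.single μ ((s - s⁻¹)⁻¹ * c)
      - AddMonoidAlgebra.single (-μ) ((s - s⁻¹)⁻¹ * c⁻¹) := by
  rw [brk, smul_sub, smul_smul, smul_smul, mono, mono, AddMonoidAlgebra.smul_single, AddMonoidAlgebra.smul_single]
  simp [mul_one]

abbrev AM : ℂ →+* LaurentAlg (Fin 2) := algebraMap ℂ (LaurentAlg (Fin 2))

lemma singleAM (μ : Fin 2 → ℤ) (z : ℂ) :
    AddMonoidAlgebra.single μ z = AM z * mono μ := by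
  rw [← Algebra.smul_def, mono, AddMonoidAlgebra.smul_single, smul_eq_mul, mul_one]

lemma zeta_mono (c : ℂˣ) (i : Fin 2) (μ : Fin 2 → ℤ) :
    zeta c i (mono μ) = AM (((c ^ (-(μ i)) : ℂˣ) : ℂ)) * mono μ := by
  rw [mono, zeta_single, mul_one, singleAM]; rfl

lemma zeta_AM (c : ℂˣ) (i : Fin 2) (z : ℂ) : zeta c i (AM z) = AM z :=
  AlgHom.commutes _ z

lemma brk_AM (s c : ℂ) (μ : Fin 2 → ℤ) :
    brk s c μ = AM ((s - s⁻¹)⁻¹ * c) * mono μ - AM ((s - s⁻¹)⁻¹ * c⁻¹) * mono (-μ) := by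
  rw [brk, smul_sub, smul_smul, smul_smul, Algebra.smul_def, Algebra.smul_def]

lemma single_apply' (μ ν : Fin 2 → ℤ) (z : ℂ) :
    (AddMonoidAlgebra.single μ z : LaurentAlg (Fin 2)) ν = if μ = ν then z else 0 := by
  classical
  rw [AddMonoidAlgebra.coeff_single, Finsupp.single_apply]

-- axis product lemma
lemma axis_mul_apply (F G : LaurentAlg (Fin 2))
    (hF : ∀ μ : Fin 2 → ℤ, μ 0 ≠ 0 → F μ = 0) (hG : ∀ μ : Fin 2 → ℤ, μ 1 ≠ 0 → G μ = 0)
    (v : Fin 2 → ℤ) :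
    (F * G) v = F ![0, v 1] * G ![v 0, 0] := by
  classical
  rw [AddMonoidAlgebra.coeff_mul]
  rw [Finsupp.sum]
  rw [Finset.sum_eq_single (![0, v 1] : Fin 2 → ℤ)]
  · rw [Finsupp.sum, Finset.sum_eq_single (![v 0, 0] : Fin 2 → ℤ)]
    · have : ![0, v 1] + ![v 0, 0] = v := by
        apply vec2_eq <;> simp
      rw [if_pos this]
    · intro a2 ha2 hne
      rw [if_neg]
      intro hsum
      have h1 : a2 1 = 0 := by
        by_contra h
        exact (Finsupp.mem_support_iff.mp ha2) (hG a2 h)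
      have h0 : a2 0 = v 0 := by
        have := congrFun hsum 0
        simpa using this
      exact hne (vec2_eq h0 h1)
    · intro h
      rw [Finsupp.notMem_support_iff.mp h, mul_zero, if_pos]
      apply vec2_eq <;> simp
  · intro a1 ha1 hne
    rw [Finsupp.sum]
    apply Finset.sum_eq_zero
    intro a2 ha2
    rw [if_neg]
    intro hsum
    have h0 : a1 0 = 0 := by
      by_contra h
      exact (Finsupp.mem_support_iff.mp ha1) (hF a1 h)
    have h1' : a2 1 = 0 := by
      by_contra h
      exact (Finsupp.mem_support_iff.mp ha2) (hG a2 h)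
    have h1 : a1 1 = v 1 := by
      have := congrFun hsum 1
      simpa [h1'] using this
    exact hne (vec2_eq h0 h1)
  · intro h
    rw [Finsupp.notMem_support_iff.mp h, Finsupp.sum]
    apply Finset.sum_eq_zero
    intro a2 _
    split_ifs <;> simp

section params
variable (p : ℂˣ)

def sc : ℂ := (p : ℂ) - (p : ℂ)⁻¹
def si : ℂ := (sc p)⁻¹
def al : ℂ := -(p : ℂ) * si p * si p
def be : ℂ := -((p : ℂ))⁻¹ * si p * si p
def cc (b : ℂ) : ℂ := si p * si p * ((p:ℂ) * b * b + (p:ℂ)⁻¹ * b⁻¹ * b⁻¹)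

def w2 : Fin 2 → ℤ := ![2, -2]
def u1 : Fin 2 → ℤ := ![1, -1]

lemma u1_add_u1 : u1 + u1 = w2 := by apply vec2_eq <;> simp [u1, w2]
lemma neg_u1_add_neg_u1 : -u1 + -u1 = -w2 := by apply vec2_eq <;> simp [u1, w2]
lemma xvec01 : xvec 0 - xvec 1 = u1 := by apply vec2_eq <;> simp [u1, xvec]
lemma xvec10 : xvec 1 - xvec 0 = -u1 := by apply vec2_eq <;> simp [u1, xvec]

variable (hp : ∀ n : ℕ, 0 < n → p ^ n ≠ 1)
include hp

lemma hpzU : ∀ k : ℤ, k ≠ 0 → p ^ k ≠ 1 := by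
  intro k hk h
  rcases lt_trichotomy k 0 with h1 | h1 | h1
  · have : p ^ (-k) = 1 := by
      rw [← inv_inv (p ^ (-k)), ← zpow_neg, neg_neg, h, inv_one]
    rw [show -k = ((-k).toNat : ℤ) by omega, zpow_natCast] at this
    exact hp (-k).toNat (by omega) this
  · exact hk h1
  · rw [show k = (k.toNat : ℤ) by omega, zpow_natCast] at h
    exact hp k.toNat (by omega) h

lemma hpz : ∀ k : ℤ, k ≠ 0 → ((p : ℂ)) ^ k ≠ 1 := by
  intro k hk h
  apply hpzU p hp k hk
  ext
  rw [Units.val_zpow_eq_zpow_val, h, Units.val_one]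

omit hp in
lemma hp0 : (p : ℂ) ≠ 0 := Units.ne_zero p

lemma hsc : sc p ≠ 0 := by
  have h2 : ((p:ℂ))^(2:ℤ) ≠ 1 := hpz p hp 2 (by norm_num)
  intro h
  apply h2
  rw [sc, sub_eq_zero] at h
  have h0 := hp0 p
  rw [show (2:ℤ) = (2:ℕ) by norm_num, zpow_natCast, pow_two]
  have : (p:ℂ) * (p:ℂ) = (p:ℂ) * (p:ℂ)⁻¹ := by rw [← h]
  rw [mul_inv_cancel₀ h0] at this
  exact this

lemma hsi : si p ≠ 0 := inv_ne_zero (hsc p hp)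

lemma hal : al p ≠ 0 := by
  have := hp0 p; have := hsi p hp
  simp [al]; tauto

lemma hbe : be p ≠ 0 := by
  have := hp0 p; have := hsi p hp
  simp [be]; tauto

def E0 : LaurentAlg (Fin 2) :=
  AddMonoidAlgebra.single (w2) (al p) + AddMonoidAlgebra.single (-w2) (be p)
def E1 : LaurentAlg (Fin 2) :=
  AddMonoidAlgebra.single (w2) (be p) + AddMonoidAlgebra.single (-w2) (al p)

omit hp in
lemma hMN : mono w2 * mono (-w2) = (1 : LaurentAlg (Fin 2)) := by
  rw [← mono_add, add_neg_cancel, mono_zero]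

omit hp in
lemma pw (k : ℤ) : ((p ^ k : ℂˣ) : ℂ) = (p:ℂ)^k := Units.val_zpow_eq_zpow_val p k

omit hp in
lemma pwi (k : ℤ) : (((p⁻¹ : ℂˣ) ^ k : ℂˣ) : ℂ) = (p:ℂ)^(-k) := by
  rw [Units.val_zpow_eq_zpow_val, Units.val_inv_eq_inv_val, inv_zpow, ← zpow_neg]

omit hp in
lemma w2_0 : w2 0 = 2 := rfl
omit hp in
lemma w2_1 : w2 1 = -2 := rfl
omit hp in
lemma nw2_0 : (-w2) 0 = -2 := rfl
omit hp in
lemma nw2_1 : (-w2) 1 = 2 := rfl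

omit hp in
lemma zpow_m2 (x : ℂ) : x^(-2:ℤ) = x⁻¹ * x⁻¹ := by
  rw [zpow_neg, show (2:ℤ) = ((2:ℕ):ℤ) by norm_num, zpow_natCast, pow_two, mul_inv]
omit hp in
lemma zpow_p2 (x : ℂ) : x^(2:ℤ) = x * x := by
  rw [show (2:ℤ) = ((2:ℕ):ℤ) by norm_num, zpow_natCast, pow_two]

-- scalar identities
lemma hq1 : ((p:ℂ)^2 - 1) ≠ 0 := by
  have := hpz p hp 2 (by norm_num)
  rw [zpow_p2, ← pow_two] at this
  exact sub_ne_zero.mpr this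

lemma hq2 : (1 - (p:ℂ)^2) ≠ 0 := by
  have := hq1 p hp
  intro h; apply this; linear_combination -h

lemma si_eq : si p = (p:ℂ) * ((p:ℂ)^2 - 1)⁻¹ := by
  have h0 := hp0 p; have ha := hq1 p hp
  rw [si, sc, show (p:ℂ) - (p:ℂ)⁻¹ = ((p:ℂ)^2 - 1) * (p:ℂ)⁻¹ by field_simp,
    mul_inv, inv_inv, mul_comm]

lemma id_m2al : (p:ℂ)^(-2:ℤ) * al p = al p + (((p:ℂ)) - ((p:ℂ))⁻¹)⁻¹ * 1 := by
  have h0 := hp0 p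
  have ha := hq1 p hp
  rw [zpow_m2, al, show (((p:ℂ)) - ((p:ℂ))⁻¹)⁻¹ = si p from rfl, si_eq p hp]
  field_simp
  ring

lemma id_p2be : (p:ℂ)^(2:ℤ) * be p = be p - (((p:ℂ)) - ((p:ℂ))⁻¹)⁻¹ * 1⁻¹ := by
  have h0 := hp0 p
  have ha := hq1 p hp
  rw [zpow_p2, be, show (((p:ℂ)) - ((p:ℂ))⁻¹)⁻¹ = si p from rfl, si_eq p hp]
  field_simp
  ring

lemma id_m2al_be : (p:ℂ)^(-2:ℤ) * al p = be p := by
  have h0 := hp0 p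
  rw [zpow_m2, al, be]
  field_simp

lemma id_p2be_al : (p:ℂ)^(2:ℤ) * be p = al p := by
  have h0 := hp0 p
  rw [zpow_p2, al, be]
  field_simp

-- zeta on E's
lemma zE0 : zeta p 0 (E0 p) = E0 p + brk (p:ℂ) 1 w2 := by
  simp only [E0]
  rw [map_add, zeta_single, zeta_single, w2_0, nw2_0, neg_neg, pw, pw, brk_AM, singleAM, singleAM]
  have e1 : AM ((p:ℂ)^(-2:ℤ) * al p) = AM (al p) + AM ((((p:ℂ)) - ((p:ℂ))⁻¹)⁻¹ * 1) := by
    rw [← map_add]; exact congrArg AM (id_m2al p hp)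
  have e2 : AM ((p:ℂ)^(2:ℤ) * be p) = AM (be p) - AM ((((p:ℂ)) - ((p:ℂ))⁻¹)⁻¹ * 1⁻¹) := by
    rw [← map_sub]; exact congrArg AM (id_p2be p hp)
  rw [singleAM, singleAM, e1, e2]
  ring

lemma zE1 : zeta p 1 (E1 p) = E1 p + brk (p:ℂ) 1 (-w2) := by
  simp only [E1]
  rw [map_add, zeta_single, zeta_single, w2_1, nw2_1, neg_neg, pw, pw, brk_AM, singleAM, singleAM, neg_neg]
  have e1 : AM ((p:ℂ)^(2:ℤ) * be p) = AM (be p) - AM ((((p:ℂ)) - ((p:ℂ))⁻¹)⁻¹ * 1⁻¹) := by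
    rw [← map_sub]; exact congrArg AM (id_p2be p hp)
  have e2 : AM ((p:ℂ)^(-2:ℤ) * al p) = AM (al p) + AM ((((p:ℂ)) - ((p:ℂ))⁻¹)⁻¹ * 1) := by
    rw [← map_add]; exact congrArg AM (id_m2al p hp)
  rw [singleAM, singleAM, e1, e2]
  ring

lemma zE0' : zeta (p⁻¹) 1 (E0 p) = E1 p := by
  simp only [E0, E1]
  rw [map_add, zeta_single, zeta_single, w2_1, nw2_1, pwi, pwi]
  simp only [neg_neg]
  rw [id_m2al_be p hp, id_p2be_al p hp]

lemma zE1' : zeta (p⁻¹) 0 (E1 p) = E0 p := by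
  simp only [E0, E1]
  rw [map_add, zeta_single, zeta_single, w2_0, nw2_0, pwi, pwi]
  simp only [neg_neg]
  rw [id_m2al_be p hp, id_p2be_al p hp]

omit hp in
lemma STAR (F G : LaurentAlg (Fin 2))
    (hF : ∀ μ : Fin 2 → ℤ, μ 0 ≠ 0 → F μ = 0) (hG : ∀ μ : Fin 2 → ℤ, μ 1 ≠ 0 → G μ = 0)
    (heq : E0 p * G + F * E1 p + F * G
      = E1 p * zeta p⁻¹ 0 G + zeta p⁻¹ 1 F * E0 p + zeta p⁻¹ 1 F * zeta p⁻¹ 0 G)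
    (v : Fin 2 → ℤ) :
    al p * G (-w2 + v) + be p * G (w2 + v) + F (v - w2) * be p + F (v + w2) * al p
        + F ![0, v 1] * G ![v 0, 0]
      = be p * ((p:ℂ)^((-w2 + v) 0) * G (-w2 + v)) + al p * ((p:ℂ)^((w2 + v) 0) * G (w2 + v))
        + (p:ℂ)^((v - w2) 1) * F (v - w2) * al p + (p:ℂ)^((v + w2) 1) * F (v + w2) * be p
        + ((p:ℂ)^(v 1) * F ![0, v 1]) * ((p:ℂ)^(v 0) * G ![v 0, 0]) := by
  have hFh : ∀ μ : Fin 2 → ℤ, μ 0 ≠ 0 → (zeta p⁻¹ 1 F) μ = 0 := by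
    intro μ hμ; rw [zeta_apply, hF μ hμ, mul_zero]
  have hGh : ∀ μ : Fin 2 → ℤ, μ 1 ≠ 0 → (zeta p⁻¹ 0 G) μ = 0 := by
    intro μ hμ; rw [zeta_apply, hG μ hμ, mul_zero]
  have h := congrArg (fun x : LaurentAlg (Fin 2) => x v) heq
  beta_reduce at h
  simp only [E0, E1, add_mul, mul_add] at h
  repeat erw [AddMonoidAlgebra.coeff_add, Finsupp.add_apply] at h
  rw [axis_mul_apply F G hF hG v, axis_mul_apply _ _ hFh hGh v] at h
  simp only [AddMonoidAlgebra.coeff_single_mul_apply, AddMonoidAlgebra.coeff_mul_single_apply,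
    sub_neg_eq_add, neg_neg, zeta_apply, pwi] at h
  simp only [Matrix.cons_val_one, Matrix.cons_val_zero, Matrix.head_cons, neg_neg, ← sub_eq_add_neg] at h
  linear_combination h

lemma brk_mul_brk (b : ℂ) (hb : b ≠ 0) :
    brk (p:ℂ) ((p:ℂ) * b) u1 * brk (p:ℂ) b (-u1)
      = E0 p + AddMonoidAlgebra.single 0 (cc p b) := by
  have hp0 := hp0 p
  rw [brk_eq, brk_eq, neg_neg, sub_mul, mul_sub, mul_sub,
    AddMonoidAlgebra.single_mul_single, AddMonoidAlgebra.single_mul_single,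
    AddMonoidAlgebra.single_mul_single, AddMonoidAlgebra.single_mul_single,
    u1_add_u1, neg_u1_add_neg_u1, add_neg_cancel, neg_add_cancel]
  rw [show ((p:ℂ) - (p:ℂ)⁻¹)⁻¹ = si p from rfl]
  have hA : AddMonoidAlgebra.single (0 : Fin 2 → ℤ) (cc p b)
      = AddMonoidAlgebra.single (0 : Fin 2 → ℤ) (si p * ((p:ℂ)*b) * (si p * b))
        + AddMonoidAlgebra.single (0 : Fin 2 → ℤ) (si p * ((p:ℂ)*b)⁻¹ * (si p * b⁻¹)) := by
    rw [← AddMonoidAlgebra.single_add]; congr 1; rw [cc]; field_simp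
  have hB : AddMonoidAlgebra.single w2 (al p)
      = -AddMonoidAlgebra.single w2 (si p * ((p:ℂ)*b) * (si p * b⁻¹)) := by
    rw [← AddMonoidAlgebra.single_neg]; congr 1; rw [al]; field_simp
  have hC : AddMonoidAlgebra.single (-w2) (be p)
      = -AddMonoidAlgebra.single (-w2) (si p * ((p:ℂ)*b)⁻¹ * (si p * b)) := by
    rw [← AddMonoidAlgebra.single_neg]; congr 1; rw [be]; field_simp
  rw [E0, hA, hB, hC]; abel

lemma brk_mul_brk' (b : ℂ) (hb : b ≠ 0) :
    brk (p:ℂ) ((p:ℂ) * b) (-u1) * brk (p:ℂ) b u1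
      = E1 p + AddMonoidAlgebra.single 0 (cc p b) := by
  have hp0 := hp0 p
  rw [brk_eq, brk_eq, neg_neg, sub_mul, mul_sub, mul_sub,
    AddMonoidAlgebra.single_mul_single, AddMonoidAlgebra.single_mul_single,
    AddMonoidAlgebra.single_mul_single, AddMonoidAlgebra.single_mul_single,
    u1_add_u1, neg_u1_add_neg_u1, add_neg_cancel, neg_add_cancel]
  rw [show ((p:ℂ) - (p:ℂ)⁻¹)⁻¹ = si p from rfl]
  have hA : AddMonoidAlgebra.single (0 : Fin 2 → ℤ) (cc p b)
      = AddMonoidAlgebra.single (0 : Fin 2 → ℤ) (si p * ((p:ℂ)*b) * (si p * b))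
        + AddMonoidAlgebra.single (0 : Fin 2 → ℤ) (si p * ((p:ℂ)*b)⁻¹ * (si p * b⁻¹)) := by
    rw [← AddMonoidAlgebra.single_add]; congr 1; rw [cc]; field_simp
  have hB : AddMonoidAlgebra.single (-w2) (al p)
      = -AddMonoidAlgebra.single (-w2) (si p * ((p:ℂ)*b) * (si p * b⁻¹)) := by
    rw [← AddMonoidAlgebra.single_neg]; congr 1; rw [al]; field_simp
  have hC : AddMonoidAlgebra.single w2 (be p)
      = -AddMonoidAlgebra.single w2 (si p * ((p:ℂ)*b)⁻¹ * (si p * b)) := by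
    rw [← AddMonoidAlgebra.single_neg]; congr 1; rw [be]; field_simp
  rw [E1, hA, hB, hC]; abel

-- zeta fixes the constant single
omit hp in
lemma zeta_single0 (c : ℂˣ) (i : Fin 2) (z : ℂ) :
    zeta c i (AddMonoidAlgebra.single (0 : Fin 2 → ℤ) z)
      = AddMonoidAlgebra.single (0 : Fin 2 → ℤ) z := by
  rw [zeta_single]
  norm_num

-- support lemmas
lemma fix0 (F : LaurentAlg (Fin 2)) (h : zeta p 0 F = F) :
    ∀ μ : Fin 2 → ℤ, μ 0 ≠ 0 → F μ = 0 := by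
  intro μ hμ
  have h2 := congrArg (fun x : LaurentAlg (Fin 2) => x μ) h
  beta_reduce at h2
  rw [zeta_apply, pw] at h2
  have hne : ((p:ℂ))^(-(μ 0)) ≠ 1 := hpz p hp _ (by omega)
  have h3 : (((p:ℂ))^(-(μ 0)) - 1) * F μ = 0 := by rw [sub_mul, h2, one_mul, sub_self]
  rcases mul_eq_zero.mp h3 with h4 | h4
  · exact absurd (by linear_combination h4) hne
  · exact h4

lemma fix1 (F : LaurentAlg (Fin 2)) (h : zeta p 1 F = F) :
    ∀ μ : Fin 2 → ℤ, μ 1 ≠ 0 → F μ = 0 := by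
  intro μ hμ
  have h2 := congrArg (fun x : LaurentAlg (Fin 2) => x μ) h
  beta_reduce at h2
  rw [zeta_apply, pw] at h2
  have hne : ((p:ℂ))^(-(μ 1)) ≠ 1 := hpz p hp _ (by omega)
  have h3 : (((p:ℂ))^(-(μ 1)) - 1) * F μ = 0 := by rw [sub_mul, h2, one_mul, sub_self]
  rcases mul_eq_zero.mp h3 with h4 | h4
  · exact absurd (by linear_combination h4) hne
  · exact h4

-- nonvanishing of recursion coefficients
lemma hco1 : ∀ k : ℤ, k ≠ -2 → be p - al p * (p:ℂ)^k ≠ 0 := by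
  intro k hk h
  have h0 := hp0 p
  have hsi := hsi p hp
  apply hpz p hp (k+2) (by omega)
  have hz : (p:ℂ)^(k+2) = (p:ℂ)^k * ((p:ℂ)*(p:ℂ)) := by
    rw [zpow_add₀ h0, zpow_p2]
  rw [hz]
  rw [be, al] at h
  have hpp : (p:ℂ) * (p:ℂ)⁻¹ = 1 := mul_inv_cancel₀ h0
  have h5 : si p * si p * ((p:ℂ)^k * ((p:ℂ)*(p:ℂ)) - 1) = 0 := by
    linear_combination ((p:ℂ)) * h + si p * si p * hpp
  rcases mul_eq_zero.mp h5 with h6 | h6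
  · exfalso
    rcases mul_eq_zero.mp h6 with h8 | h8 <;> exact hsi h8
  · linear_combination h6

lemma hco2 : ∀ k : ℤ, k ≠ 2 → al p - be p * (p:ℂ)^k ≠ 0 := by
  intro k hk h
  have h0 := hp0 p
  have hsi := hsi p hp
  apply hpz p hp (k-2) (by omega)
  have hz : (p:ℂ)^(k-2) = (p:ℂ)^k * ((p:ℂ)⁻¹*(p:ℂ)⁻¹) := by
    rw [show k - 2 = k + (-2) by ring, zpow_add₀ h0, zpow_m2]
  rw [hz]
  rw [be, al] at h
  have hpp : (p:ℂ) * (p:ℂ)⁻¹ = 1 := mul_inv_cancel₀ h0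
  have h5 : si p * si p * ((p:ℂ)^k * ((p:ℂ)⁻¹*(p:ℂ)⁻¹) - 1) = 0 := by
    linear_combination ((p:ℂ)⁻¹) * h + si p * si p * hpp
  rcases mul_eq_zero.mp h5 with h6 | h6
  · exfalso
    rcases mul_eq_zero.mp h6 with h8 | h8 <;> exact hsi h8
  · linear_combination h6

-- existence of b with cc p b = any given constant
lemma quad_root (t : ℂ) : ∃ w : ℂ, w ≠ 0 ∧ (p:ℂ) * w * w - t * w + (p:ℂ)⁻¹ = 0 := by
  have h0 := hp0 p
  obtain ⟨z, hz⟩ := Complex.isAlgClosed.exists_pow_nat_eq (t^2 - 4) (n := 2) (by norm_num)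
  have hroot : (p:ℂ) * ((t + z) / (2 * (p:ℂ))) * ((t + z) / (2 * (p:ℂ)))
      - t * ((t + z) / (2 * (p:ℂ))) + (p:ℂ)⁻¹ = 0 := by
    field_simp
    linear_combination hz
  refine ⟨(t + z) / (2 * (p:ℂ)), ?_, hroot⟩
  intro hw0
  rw [hw0] at hroot
  apply inv_ne_zero h0
  linear_combination hroot

lemma exists_b (c0 : ℂ) : ∃ b : ℂ, b ≠ 0 ∧ cc p b = c0 := by
  have h0 := hp0 p
  have hs := hsc p hp
  have hsi := hsi p hp
  obtain ⟨w, hwne, hroot⟩ := quad_root p hp (sc p * sc p * c0)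
  obtain ⟨b, hb⟩ := Complex.isAlgClosed.exists_pow_nat_eq w (n := 2) (by norm_num)
  have hbne : b ≠ 0 := by
    intro h
    rw [h] at hb
    apply hwne
    rw [← hb]
    norm_num
  refine ⟨b, hbne, ?_⟩
  have hb2 : b * b = w := by rw [← hb]; ring
  have hbi : b⁻¹ * b⁻¹ = w⁻¹ := by rw [← mul_inv, hb2]
  have key : (p:ℂ) * w + (p:ℂ)⁻¹ * w⁻¹ = sc p * sc p * c0 := by
    have hwi : w * w⁻¹ = 1 := mul_inv_cancel₀ hwne
    have h2 : ((p:ℂ) * w + (p:ℂ)⁻¹ * w⁻¹ - sc p * sc p * c0) * w = 0 := by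
      linear_combination hroot + ((p:ℂ)⁻¹) * hwi
    rcases mul_eq_zero.mp h2 with h3 | h3
    · linear_combination h3
    · exact absurd h3 hwne
  have hscsi : sc p * (sc p)⁻¹ = 1 := mul_inv_cancel₀ hs
  rw [cc, si]
  linear_combination ((sc p)⁻¹*(sc p)⁻¹*(p:ℂ)) * hb2 + ((sc p)⁻¹*(sc p)⁻¹*(p:ℂ)⁻¹) * hbi
    + ((sc p)⁻¹*(sc p)⁻¹) * key + (c0 * ((sc p)⁻¹ * sc p + 1)) * hscsi

omit hp in
lemma STAR2 (F G : LaurentAlg (Fin 2))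
    (hF : ∀ μ : Fin 2 → ℤ, μ 0 ≠ 0 → F μ = 0) (hG : ∀ μ : Fin 2 → ℤ, μ 1 ≠ 0 → G μ = 0)
    (heq : E0 p * G + F * E1 p + F * G
      = E1 p * zeta p⁻¹ 0 G + zeta p⁻¹ 1 F * E0 p + zeta p⁻¹ 1 F * zeta p⁻¹ 0 G)
    (m n : ℤ) :
    al p * G ![m-2, n+2] + be p * G ![m+2, n-2] + F ![m-2, n+2] * be p + F ![m+2, n-2] * al p
        + F ![0, n] * G ![m, 0]
      = be p * ((p:ℂ)^(m-2) * G ![m-2, n+2]) + al p * ((p:ℂ)^(m+2) * G ![m+2, n-2])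
        + (p:ℂ)^(n+2) * F ![m-2, n+2] * al p + (p:ℂ)^(n-2) * F ![m+2, n-2] * be p
        + ((p:ℂ)^n * F ![0, n]) * ((p:ℂ)^m * G ![m, 0]) := by
  have h := STAR p F G hF hG heq ![m, n]
  rw [show -w2 + ![m,n] = ![m-2,n+2] by apply vec2_eq <;> (simp [w2]; try ring),
      show w2 + ![m,n] = ![m+2,n-2] by apply vec2_eq <;> (simp [w2]; try ring),
      show ![m,n] - w2 = ![m-2,n+2] by apply vec2_eq <;> (simp [w2]; try ring),
      show ![m,n] + w2 = ![m+2,n-2] by apply vec2_eq <;> (simp [w2]; try ring)] at h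
  simp only [Matrix.cons_val_zero, Matrix.cons_val_one, Matrix.head_cons] at h
  exact h

end params

lemma lemA (P A B c2 c2' : ℂ)
    (hco1 : ∀ k : ℤ, k ≠ -2 → B - A * P^k ≠ 0)
    (hco2 : ∀ k : ℤ, k ≠ 2 → A - B * P^k ≠ 0)
    (f : ℤ → ℂ) (S : Finset ℤ) (hS : ∀ n, f n ≠ 0 → n ∈ S)
    (hR1 : ∀ n : ℤ, n ≠ -2 → n ≠ 2 → (B - A * P^(n+2)) * f (n+2) + (1 - P^(n+2)) * f n * c2 = 0)
    (hR2 : ∀ n : ℤ, n ≠ -2 → n ≠ 2 → (A - B * P^(n-2)) * f (n-2) + (1 - P^(n-2)) * f n * c2' = 0) :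
    ∀ n : ℤ, n ≠ -2 → n ≠ 0 → n ≠ 2 → f n = 0 := by
  classical
  intro n hn2 hn0 hn2'
  by_contra hn
  set T : Finset ℤ := S.filter (fun m => f m ≠ 0) with hT
  have hmemT : ∀ m : ℤ, f m ≠ 0 → m ∈ T := fun m h => Finset.mem_filter.mpr ⟨hS m h, h⟩
  have hfT : ∀ m ∈ T, f m ≠ 0 := fun m h => (Finset.mem_filter.mp h).2
  have hne : T.Nonempty := ⟨n, hmemT n hn⟩
  have hNmem := T.max'_mem hne
  have hMmem := T.min'_mem hne
  set N := T.max' hne with hNdef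
  set M := T.min' hne with hMdef
  have hN2 : N ≤ 2 := by
    by_contra hc
    push_neg at hc
    have h3 := hR2 (N+2) (by omega) (by omega)
    have h4 : f (N + 2) = 0 := by
      by_contra hf
      have := T.le_max' _ (hmemT _ hf)
      omega
    rw [show N + 2 - 2 = N by ring, h4] at h3
    simp only [mul_zero, zero_mul, add_zero] at h3
    rcases mul_eq_zero.mp h3 with h5 | h5
    · exact hco2 N (by omega) h5
    · exact hfT N hNmem h5
  have hM2 : -2 ≤ M := by
    by_contra hc
    push_neg at hc
    have h3 := hR1 (M-2) (by omega) (by omega)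
    have h4 : f (M - 2) = 0 := by
      by_contra hf
      have := T.min'_le _ (hmemT _ hf)
      omega
    rw [show M - 2 + 2 = M by ring, h4] at h3
    simp only [mul_zero, zero_mul, add_zero] at h3
    rcases mul_eq_zero.mp h3 with h5 | h5
    · exact hco1 M (by omega) h5
    · exact hfT M hMmem h5
  have hnN : n ≤ N := T.le_max' _ (hmemT n hn)
  have hnM : M ≤ n := T.min'_le _ (hmemT n hn)
  have hfm3 : f (-3) = 0 := by
    by_contra hf
    have := T.min'_le _ (hmemT _ hf)
    omega
  have hfm1 : f (-1) = 0 := by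
    have h3 := hR1 (-3) (by norm_num) (by norm_num)
    rw [show (-3:ℤ) + 2 = -1 by norm_num, hfm3] at h3
    simp only [mul_zero, zero_mul, add_zero] at h3
    rcases mul_eq_zero.mp h3 with h5 | h5
    · exact absurd h5 (hco1 (-1) (by norm_num))
    · exact h5
  have hf1 : f 1 = 0 := by
    have h3 := hR1 (-1) (by norm_num) (by norm_num)
    rw [show (-1:ℤ) + 2 = 1 by norm_num, hfm1] at h3
    simp only [mul_zero, zero_mul, add_zero] at h3
    rcases mul_eq_zero.mp h3 with h5 | h5
    · exact absurd h5 (hco1 1 (by norm_num))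
    · exact h5
  have : n = -1 ∨ n = 1 := by omega
  rcases this with h | h
  · rw [h] at hn; exact hn hfm1
  · rw [h] at hn; exact hn hf1

end AuxShift

/-- For the affine Cartan matrix of type `A_1^{(1)}` (indexed by `Fin 2`,
`a_{01} = a_{10} = -2`, `q_0 = q_1 = p`), a pair `(φ_0, φ_1)` solves the shiftability
system if and only if `φ_0 = {p·b·x_0x_1⁻¹}·{b·x_0⁻¹x_1}` and
`φ_1 = {p·b·x_0⁻¹x_1}·{b·x_0x_1⁻¹}` for some `b ∈ ℂˣ`. -/
theorem shiftability_A1_aff_iff (p : ℂˣ) (hp : ∀ n : ℕ, 0 < n → p ^ n ≠ 1)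
    (φ₀ φ₁ : LaurentAlg (Fin 2)) :
    ShiftSystem (fun i j : Fin 2 => if i = j then 2 else -2) (fun _ : Fin 2 => p) ![φ₀, φ₁] ↔
      ∃ b : ℂˣ,
        φ₀ = brk (p : ℂ) ((p : ℂ) * (b : ℂ)) (xvec 0 - xvec 1) *
            brk (p : ℂ) (b : ℂ) (xvec 1 - xvec 0) ∧
        φ₁ = brk (p : ℂ) ((p : ℂ) * (b : ℂ)) (xvec 1 - xvec 0) *
            brk (p : ℂ) (b : ℂ) (xvec 0 - xvec 1) := by
  have h0 := hp0 p
  have hv0 : (fun j : Fin 2 => if j = (0:Fin 2) then (2:ℤ) else -2) = w2 := by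
    funext j; fin_cases j <;> rfl
  have hv1 : (fun j : Fin 2 => if j = (1:Fin 2) then (2:ℤ) else -2) = -w2 := by
    funext j; fin_cases j <;> rfl
  constructor
  · rintro ⟨h1, h2⟩
    have hs := hsc p hp
    have hsiv := hsi p hp
    have h10 := h1 0
    have h11 := h1 1
    simp only [Matrix.cons_val_zero, Matrix.cons_val_one, Matrix.head_cons] at h10 h11
    rw [hv0] at h10
    rw [hv1] at h11
    set F : LaurentAlg (Fin 2) := φ₀ - E0 p with hFdef
    set G : LaurentAlg (Fin 2) := φ₁ - E1 p with hGdef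
    have hφ0 : φ₀ = E0 p + F := by rw [hFdef]; ring
    have hφ1 : φ₁ = E1 p + G := by rw [hGdef]; ring
    have hzF : zeta p 0 F = F := by
      rw [hFdef, map_sub, zE0 p hp]
      have hz : zeta p 0 φ₀ = φ₀ + brk ((p:ℂ)) 1 w2 := by linear_combination h10
      rw [hz]; ring
    have hzG : zeta p 1 G = G := by
      rw [hGdef, map_sub, zE1 p hp]
      have hz : zeta p 1 φ₁ = φ₁ + brk ((p:ℂ)) 1 (-w2) := by linear_combination h11
      rw [hz]; ring
    have hFs := fix0 p hp F hzF
    have hGs := fix1 p hp G hzG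
    have h201 := h2 0 1 (by decide)
    simp only [Matrix.cons_val_zero, Matrix.cons_val_one, Matrix.head_cons] at h201
    rw [hφ0, hφ1, map_add, map_add, zE0' p hp, zE1' p hp] at h201
    have heq : E0 p * G + F * E1 p + F * G
        = E1 p * zeta p⁻¹ 0 G + zeta p⁻¹ 1 F * E0 p + zeta p⁻¹ 1 F * zeta p⁻¹ 0 G := by
      linear_combination h201
    have star := STAR2 p F G hFs hGs heq
    have hco1' := hco1 p hp
    have hco2' := hco2 p hp
    -- recursion families
    have hR1 : ∀ n : ℤ, n ≠ -2 → n ≠ 2 →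
        (be p - al p * (p:ℂ)^(n+2)) * F ![0, n+2]
          + (1 - (p:ℂ)^(n+2)) * F ![0, n] * G ![2, 0] = 0 := by
      intro n hn2 hn2'
      have h := star 2 n
      rw [show (2:ℤ)-2 = 0 by norm_num, show (2:ℤ)+2 = 4 by norm_num] at h
      rw [hGs ![(0:ℤ), n+2] (by simp; omega), hGs ![(4:ℤ), n-2] (by simp; omega),
          hFs ![(4:ℤ), n-2] (by simp)] at h
      have hzz : (p:ℂ)^(n+2) = (p:ℂ)^n * (p:ℂ)^(2:ℤ) := zpow_add₀ h0 n 2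
      linear_combination h - F ![0,n] * G ![2,0] * hzz
    have hR2 : ∀ n : ℤ, n ≠ -2 → n ≠ 2 →
        (al p - be p * (p:ℂ)^(n-2)) * F ![0, n-2]
          + (1 - (p:ℂ)^(n-2)) * F ![0, n] * G ![-2, 0] = 0 := by
      intro n hn2 hn2'
      have h := star (-2) n
      rw [show (-2:ℤ)-2 = -4 by norm_num, show (-2:ℤ)+2 = 0 by norm_num] at h
      rw [hGs ![(-4:ℤ), n+2] (by simp; omega), hGs ![(0:ℤ), n-2] (by simp; omega),
          hFs ![(-4:ℤ), n+2] (by simp)] at h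
      have hzz : (p:ℂ)^(n-2) = (p:ℂ)^n * (p:ℂ)^(-2:ℤ) := by
        rw [show n-2 = n + (-2) by ring, zpow_add₀ h0]
      linear_combination h - F ![0,n] * G ![-2,0] * hzz
    have hS1 : ∀ m : ℤ, m ≠ -2 → m ≠ 2 →
        (be p - al p * (p:ℂ)^(m+2)) * G ![m+2, 0]
          + (1 - (p:ℂ)^(m+2)) * G ![m, 0] * F ![0, 2] = 0 := by
      intro m hm2 hm2'
      have h := star m 2
      rw [show (2:ℤ)+2 = 4 by norm_num, show (2:ℤ)-2 = 0 by norm_num] at h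
      rw [hGs ![m-2, (4:ℤ)] (by simp), hFs ![m-2, (4:ℤ)] (by simp; omega),
          hFs ![m+2, (0:ℤ)] (by simp; omega)] at h
      have hzz : (p:ℂ)^(m+2) = (p:ℂ)^m * (p:ℂ)^(2:ℤ) := zpow_add₀ h0 m 2
      linear_combination h - G ![m,0] * F ![0,2] * hzz
    have hS2 : ∀ m : ℤ, m ≠ -2 → m ≠ 2 →
        (al p - be p * (p:ℂ)^(m-2)) * G ![m-2, 0]
          + (1 - (p:ℂ)^(m-2)) * G ![m, 0] * F ![0, -2] = 0 := by
      intro m hm2 hm2'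
      have h := star m (-2)
      rw [show (-2:ℤ)+2 = 0 by norm_num, show (-2:ℤ)-2 = -4 by norm_num] at h
      rw [hGs ![m+2, (-4:ℤ)] (by simp), hFs ![m+2, (-4:ℤ)] (by simp; omega),
          hFs ![m-2, (0:ℤ)] (by simp; omega)] at h
      have hzz : (p:ℂ)^(m-2) = (p:ℂ)^m * (p:ℂ)^(-2:ℤ) := by
        rw [show m-2 = m + (-2) by ring, zpow_add₀ h0]
      linear_combination h - G ![m,0] * F ![0,-2] * hzz
    -- support outside {-2,0,2} vanishes
    have hfA : ∀ k : ℤ, k ≠ -2 → k ≠ 0 → k ≠ 2 → F ![0, k] = 0 := by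
      have hSF : ∀ k : ℤ, (fun k : ℤ => F ![0, k]) k ≠ 0
          → k ∈ F.coeff.support.image (fun μ : Fin 2 → ℤ => μ 1) := by
        intro k hk
        exact Finset.mem_image.mpr ⟨![0, k], Finsupp.mem_support_iff.mpr hk, by simp⟩
      exact lemA ((p:ℂ)) (al p) (be p) (G ![2,0]) (G ![-2,0]) hco1' hco2'
        (fun k : ℤ => F ![0, k]) (F.coeff.support.image (fun μ : Fin 2 → ℤ => μ 1)) hSF hR1 hR2
    have hgA : ∀ k : ℤ, k ≠ -2 → k ≠ 0 → k ≠ 2 → G ![k, 0] = 0 := by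
      have hSG : ∀ k : ℤ, (fun k : ℤ => G ![k, 0]) k ≠ 0
          → k ∈ G.coeff.support.image (fun μ : Fin 2 → ℤ => μ 0) := by
        intro k hk
        exact Finset.mem_image.mpr ⟨![k, 0], Finsupp.mem_support_iff.mpr hk, by simp⟩
      exact lemA ((p:ℂ)) (al p) (be p) (F ![0,2]) (F ![0,-2]) hco1' hco2'
        (fun k : ℤ => G ![k, 0]) (G.coeff.support.image (fun μ : Fin 2 → ℤ => μ 0)) hSG hS1 hS2
    -- the four corner coefficients vanish
    have h22 : F ![0, 2] * G ![2, 0] = 0 := by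
      have h := star 2 2
      rw [show (2:ℤ)-2 = 0 by norm_num, show (2:ℤ)+2 = 4 by norm_num] at h
      rw [hGs ![(0:ℤ), 4] (by simp), hFs ![(4:ℤ), 0] (by simp),
          hfA 4 (by norm_num) (by norm_num) (by norm_num),
          hgA 4 (by norm_num) (by norm_num) (by norm_num)] at h
      have hzz : (p:ℂ)^(4:ℤ) = (p:ℂ)^(2:ℤ) * (p:ℂ)^(2:ℤ) := by
        rw [← zpow_add₀ h0]; norm_num
      have h4 : (1 - (p:ℂ)^(4:ℤ)) * (F ![0,2] * G ![2,0]) = 0 := by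
        linear_combination h - F ![0,2] * G ![2,0] * hzz
      rcases mul_eq_zero.mp h4 with h5 | h5
      · exact absurd (by linear_combination -h5) (hpz p hp 4 (by norm_num))
      · exact h5
    have h2m2 : F ![0, -2] * G ![-2, 0] = 0 := by
      have h := star (-2) (-2)
      rw [show (-2:ℤ)-2 = -4 by norm_num, show (-2:ℤ)+2 = 0 by norm_num] at h
      rw [hGs ![(0:ℤ), -4] (by simp), hFs ![(-4:ℤ), 0] (by simp),
          hfA (-4) (by norm_num) (by norm_num) (by norm_num),
          hgA (-4) (by norm_num) (by norm_num) (by norm_num)] at h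
      have hzz : (p:ℂ)^(-4:ℤ) = (p:ℂ)^(-2:ℤ) * (p:ℂ)^(-2:ℤ) := by
        rw [← zpow_add₀ h0]; norm_num
      have h4 : (1 - (p:ℂ)^(-4:ℤ)) * (F ![0,-2] * G ![-2,0]) = 0 := by
        linear_combination h - F ![0,-2] * G ![-2,0] * hzz
      rcases mul_eq_zero.mp h4 with h5 | h5
      · exact absurd (by linear_combination -h5) (hpz p hp (-4) (by norm_num))
      · exact h5
    have hf2 : F ![0, 2] = 0 := by
      rcases mul_eq_zero.mp h22 with h | h
      · exact h
      · have h3 := hR1 0 (by norm_num) (by norm_num)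
        rw [show (0:ℤ)+2 = 2 by norm_num, h] at h3
        simp only [mul_zero, zero_mul, add_zero] at h3
        rcases mul_eq_zero.mp h3 with h5 | h5
        · exact absurd h5 (hco1' 2 (by norm_num))
        · exact h5
    have hg2 : G ![2, 0] = 0 := by
      have h3 := hS1 0 (by norm_num) (by norm_num)
      rw [show (0:ℤ)+2 = 2 by norm_num, hf2] at h3
      simp only [mul_zero, zero_mul, add_zero] at h3
      rcases mul_eq_zero.mp h3 with h5 | h5
      · exact absurd h5 (hco1' 2 (by norm_num))
      · exact h5
    have hfm2 : F ![0, -2] = 0 := by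
      rcases mul_eq_zero.mp h2m2 with h | h
      · exact h
      · have h3 := hR2 0 (by norm_num) (by norm_num)
        rw [show (0:ℤ)-2 = -2 by norm_num, h] at h3
        simp only [mul_zero, zero_mul, add_zero] at h3
        rcases mul_eq_zero.mp h3 with h5 | h5
        · exact absurd h5 (hco2' (-2) (by norm_num))
        · exact h5
    have hgm2 : G ![-2, 0] = 0 := by
      have h3 := hS2 0 (by norm_num) (by norm_num)
      rw [show (0:ℤ)-2 = -2 by norm_num, hfm2] at h3
      simp only [mul_zero, zero_mul, add_zero] at h3
      rcases mul_eq_zero.mp h3 with h5 | h5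
      · exact absurd h5 (hco2' (-2) (by norm_num))
      · exact h5
    -- the constants agree
    have halbe : al p - be p ≠ 0 := by
      have h1' : (sc p) * (sc p)⁻¹ = 1 := mul_inv_cancel₀ hs
      have h2' : sc p = (p:ℂ) - (p:ℂ)⁻¹ := rfl
      have : al p - be p = -(si p) := by
        rw [al, be, si]
        linear_combination (-(sc p)⁻¹) * h1' + ((sc p)⁻¹*(sc p)⁻¹) * h2'
      rw [this]
      simpa using hsiv
    have hf0g0 : F ![(0:ℤ), 0] = G ![(0:ℤ), 0] := by
      have h := star 2 (-2)
      rw [show (2:ℤ)-2 = 0 by norm_num, show (2:ℤ)+2 = 4 by norm_num,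
        show (-2:ℤ)+2 = 0 by norm_num, show (-2:ℤ)-2 = -4 by norm_num] at h
      rw [hGs ![(4:ℤ), -4] (by simp), hFs ![(4:ℤ), -4] (by simp), hfm2, hg2] at h
      rw [zpow_zero] at h
      have h4 : (al p - be p) * (G ![(0:ℤ),0] - F ![(0:ℤ),0]) = 0 := by
        linear_combination h
      rcases mul_eq_zero.mp h4 with h5 | h5
      · exact absurd h5 halbe
      · linear_combination -h5
    -- F and G are the constants
    have hFconst : F = AddMonoidAlgebra.single (0 : Fin 2 → ℤ) (F ![(0:ℤ), 0]) := by
      ext ν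
      rw [single_apply']
      by_cases hc : (0 : Fin 2 → ℤ) = ν
      · rw [if_pos hc, ← hc]
        congr 1
        apply vec2_eq <;> simp
      · rw [if_neg hc]
        by_cases hc0 : ν 0 = 0
        · have hν1 : ν 1 ≠ 0 := by
            intro hz1
            exact hc (vec2_eq (by simp [hc0]) (by simp [hz1]))
          have hν' : ν = ![(0:ℤ), ν 1] := by apply vec2_eq <;> simp [hc0]
          rw [hν']
          rcases eq_or_ne (ν 1) (-2) with he | he
          · rw [he]; exact hfm2
          · rcases eq_or_ne (ν 1) 2 with he2 | he2
            · rw [he2]; exact hf2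
            · exact hfA (ν 1) he hν1 he2
        · exact hFs ν hc0
    have hGconst : G = AddMonoidAlgebra.single (0 : Fin 2 → ℤ) (G ![(0:ℤ), 0]) := by
      ext ν
      rw [single_apply']
      by_cases hc : (0 : Fin 2 → ℤ) = ν
      · rw [if_pos hc, ← hc]
        congr 1
        apply vec2_eq <;> simp
      · rw [if_neg hc]
        by_cases hc1 : ν 1 = 0
        · have hν0 : ν 0 ≠ 0 := by
            intro hz1
            exact hc (vec2_eq (by simp [hz1]) (by simp [hc1]))
          have hν' : ν = ![ν 0, (0:ℤ)] := by apply vec2_eq <;> simp [hc1]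
          rw [hν']
          rcases eq_or_ne (ν 0) (-2) with he | he
          · rw [he]; exact hgm2
          · rcases eq_or_ne (ν 0) 2 with he2 | he2
            · rw [he2]; exact hg2
            · exact hgA (ν 0) he hν0 he2
        · exact hGs ν hc1
    obtain ⟨bb, hbbne, hbbcc⟩ := exists_b p hp (F ![(0:ℤ), 0])
    refine ⟨Units.mk0 bb hbbne, ?_, ?_⟩
    · rw [xvec01, xvec10, show ((Units.mk0 bb hbbne : ℂˣ) : ℂ) = bb from rfl,
        brk_mul_brk p hp bb hbbne, hφ0, hFconst, hbbcc]
    · rw [xvec01, xvec10, show ((Units.mk0 bb hbbne : ℂˣ) : ℂ) = bb from rfl,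
        brk_mul_brk' p hp bb hbbne, hφ1, hGconst, hbbcc, hf0g0]
  · rintro ⟨b, hb0, hb1⟩
    rw [hb0, hb1, xvec01, xvec10, brk_mul_brk p hp (b:ℂ) b.ne_zero,
      brk_mul_brk' p hp (b:ℂ) b.ne_zero]
    set S : LaurentAlg (Fin 2) := AddMonoidAlgebra.single 0 (cc p (b:ℂ)) with hS
    have z0 : zeta p⁻¹ 1 (E0 p + S) = E1 p + S := by
      rw [hS, map_add, zE0' p hp, zeta_single0]
    have z1 : zeta p⁻¹ 0 (E1 p + S) = E0 p + S := by
      rw [hS, map_add, zE1' p hp, zeta_single0]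
    have hI0 : zeta p 0 (E0 p + S) - (E0 p + S)
        = brk ((p:ℂ)) 1 (fun j : Fin 2 => if j = (0:Fin 2) then (2:ℤ) else -2) := by
      rw [hv0, hS, map_add, zE0 p hp, zeta_single0]
      abel
    have hI1 : zeta p 1 (E1 p + S) - (E1 p + S)
        = brk ((p:ℂ)) 1 (fun j : Fin 2 => if j = (1:Fin 2) then (2:ℤ) else -2) := by
      rw [hv1, hS, map_add, zE1 p hp, zeta_single0]
      abel
    have hX01 : (E0 p + S) * (E1 p + S) = zeta p⁻¹ 1 (E0 p + S) * zeta p⁻¹ 0 (E1 p + S) := by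
      rw [z0, z1, mul_comm]
    have hX10 : (E1 p + S) * (E0 p + S) = zeta p⁻¹ 0 (E1 p + S) * zeta p⁻¹ 1 (E0 p + S) := by
      rw [z0, z1, mul_comm]
    constructor
    · intro i
      fin_cases i
      · exact hI0
      · exact hI1
    · intro i j hij
      fin_cases i <;> fin_cases j
      · exact absurd rfl hij
      · exact hX01
      · exact hX10
      · exact absurd rfl hij

end
end

section
/- Let n ≥ 2, I = {0,1,…,n}, and let A be the affine Cartan matrix of type C_n^{(1)}: a_{ii} = 2, a_{01} = -1, a_{10} = -2, a_{i,i+1} = a_{i+1,i} = -1 for 1 ≤ i ≤ n−2, a_{n-1,n} = -2, a_{n,n-1} = -1, and all other entries 0; set q_0 = q_n = p^4 and q_i = p^2 for 1 ≤ i ≤ n−1. Define z_i = x_{i-1}^{-1} x_i for 1 ≤ i ≤ n (so that y_0 = z_1^{-2}, y_i = z_i z_{i+1}^{-1} for 1 ≤ i ≤ n−1, and y_n = z_n^2). Then for b = p^{-1} and also for b = ı·p^{-1}, the tuple φ_0 = {p^4·b·z_1^{-1}}_0·{b·z_1}_0, φ_i = {p^2·b·z_i}_i·{b·z_{i+1}}_i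 for 1 ≤ i ≤ n−1, and φ_n = {p^4·b·z_n}_n·{b·z_n^{-1}}_n satisfies the shiftability system for A. -/
noncomputable section
namespace ShiftAux
variable {ι : Type*}

lemma mono_mul (μ ν : ι → ℤ) : mono μ * mono ν = mono (μ + ν) := (mono_add μ ν).symm

lemma zeta_mono (c : ℂˣ) (i : ι) (μ : ι → ℤ) :
    zeta c i (mono μ) = ((c : ℂ) ^ (-(μ i))) • mono μ := by
  unfold zeta mono
  rw [AddMonoidAlgebra.lift_single]
  simp [zetaHom, mono, Units.val_zpow_eq_zpow_val]

lemma zeta_brk (c : ℂˣ) (i : ι) (s d : ℂ) (μ : ι → ℤ) :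
    zeta c i (brk s d μ) = brk s ((c : ℂ) ^ (-(μ i)) * d) μ := by
  have hc : (c : ℂ) ≠ 0 := c.ne_zero
  unfold brk
  rw [map_smul, map_sub, map_smul, map_smul, zeta_mono, zeta_mono]
  have hco : ((c : ℂ) ^ (-(μ i)) * d)⁻¹ = (c : ℂ) ^ (-((-μ) i)) * d⁻¹ := by
    rw [mul_inv, ← zpow_neg, Pi.neg_apply, neg_neg]
  rw [hco]
  congr 1
  rw [smul_smul, smul_smul, mul_comm d, mul_comm d⁻¹, Pi.neg_apply, neg_neg]

lemma brk_mul (s t d e : ℂ) (μ ν : ι → ℤ) :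
    brk s d μ * brk t e ν =
      ((s - s⁻¹)⁻¹ * (t - t⁻¹)⁻¹) •
        ((d * e) • mono (μ + ν) - (d * e⁻¹) • mono (μ + -ν) - (d⁻¹ * e) • mono (-μ + ν)
          + (d⁻¹ * e⁻¹) • mono (-μ + -ν)) := by
  unfold brk
  simp only [smul_sub, smul_smul, smul_mul_assoc, mul_smul_comm, sub_mul, mul_sub, mono_mul]
  module

lemma brk_mul_same (S s d e : ℂ) (α : ι → ℤ) :
    brk S d α * brk s e α =
      ((S - S⁻¹)⁻¹ * (s - s⁻¹)⁻¹) •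
        ((d * e) • mono (α + α) - (d * e⁻¹ + d⁻¹ * e) • (1 : LaurentAlg ι)
          + (d⁻¹ * e⁻¹) • mono (-α + -α)) := by
  rw [brk_mul]
  congr 1
  have h1 : α + -α = 0 := by abel
  have h2 : -α + α = 0 := by abel
  rw [h1, h2, mono_zero]
  module

lemma quad_eq (S s d e d' e' : ℂ) (α : ι → ℤ) (h1 : d * e = d' * e')
    (h2 : d⁻¹ * e⁻¹ = d'⁻¹ * e'⁻¹) (h3 : d * e⁻¹ + d⁻¹ * e = d' * e'⁻¹ + d'⁻¹ * e') :
    brk S d α * brk s e α = brk S d' α * brk s e' α := by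
  rw [brk_mul_same, brk_mul_same, h1, h2, h3]

lemma brk_swap (S s d e : ℂ) (α : ι → ℤ) :
    brk S d α * brk s e α = brk S e α * brk s d α :=
  quad_eq S s d e e d α (mul_comm _ _) (mul_comm _ _) (by ring)

lemma brk_neg (s d : ℂ) (α : ι → ℤ) : brk s d (-α) = -brk s d⁻¹ α := by
  unfold brk
  rw [neg_neg, inv_inv]
  module

lemma zeta_brk_far (c : ℂˣ) (j : ι) (s d : ℂ) (μ : ι → ℤ) (h : μ j = 0) :
    zeta c j (brk s d μ) = brk s d μ := by
  rw [zeta_brk, h]; norm_num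

lemma zeta_inv_brk_one (c : ℂˣ) (j : ι) (s d : ℂ) (μ : ι → ℤ) (h : μ j = 1) :
    zeta c⁻¹ j (brk s d μ) = brk s ((c : ℂ) * d) μ := by
  rw [zeta_brk, h]
  norm_num

lemma zeta_inv_brk_negone (c : ℂˣ) (j : ι) (s d : ℂ) (μ : ι → ℤ) (h : μ j = -1) :
    zeta c⁻¹ j (brk s d μ) = brk s ((c : ℂ)⁻¹ * d) μ := by
  rw [zeta_brk, h]
  norm_num


lemma eq1 (c : ℂˣ) (i : ι) (e : ℂ) (he : e ≠ 0)
    (hc2 : (c : ℂ) ^ 2 - 1 ≠ 0) (μ ν : ι → ℤ) (hμ : μ i = 1) (hν : ν i = -1) :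
    zeta c i (brk (c : ℂ) ((c : ℂ) * e) μ * brk (c : ℂ) e ν)
      - brk (c : ℂ) ((c : ℂ) * e) μ * brk (c : ℂ) e ν = brk (c : ℂ) 1 (μ + -ν) := by
  have hc : (c : ℂ) ≠ 0 := c.ne_zero
  have h0 : (c : ℂ) - (c : ℂ)⁻¹ = ((c : ℂ) ^ 2 - 1) * (c : ℂ)⁻¹ := by
    field_simp
  have hk : ((c : ℂ) - (c : ℂ)⁻¹)⁻¹ = (c : ℂ) * ((c : ℂ) ^ 2 - 1)⁻¹ := by
    rw [h0, mul_inv, inv_inv, mul_comm]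
  rw [map_mul, zeta_brk, zeta_brk, hμ, hν]
  simp only [neg_neg, zpow_neg, zpow_one]
  rw [brk_mul, brk_mul]
  have hne : -(μ + -ν) = -μ + ν := by abel
  unfold brk
  rw [hne]
  simp only [hk]
  match_scalars <;> (field_simp; try ring)

variable (s bb e : ℂ) (hs : s ≠ 0) (hb : bb ≠ 0) (he2 : e ^ 2 = 1) (h : bb ^ 2 * s = e)

section
include hs hb he2 h

lemma hbi_aux : bb⁻¹ = bb * s * e := by
  refine inv_eq_of_mul_eq_one_right ?_
  linear_combination e * h + he2

lemma hsi_aux : s⁻¹ = bb ^ 2 * e := by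
  refine inv_eq_of_mul_eq_one_right ?_
  linear_combination e * h + he2

lemma hei_aux : e⁻¹ = e := by
  refine inv_eq_of_mul_eq_one_right ?_
  linear_combination he2

lemma cubic01 (α β : ι → ℤ) :
    brk (s ^ 2) (s ^ 2 * bb) (-α) * brk (s ^ 2) bb α * (brk s (s * bb) α * brk s bb β)
      = brk (s ^ 2) (s⁻¹ * (s ^ 2 * bb)) (-α) * brk (s ^ 2) (s * bb) α *
          (brk s ((s ^ 2)⁻¹ * (s * bb)) α * brk s bb β) := by
  have hbi := hbi_aux s bb e hs hb he2 h
  have hsi := hsi_aux s bb e hs hb he2 h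
  have hei := hei_aux s bb e hs hb he2 h
  have sw : brk (s ^ 2) bb α * brk s (s * bb) α = brk (s ^ 2) (s * bb) α * brk s bb α :=
    brk_swap _ _ _ _ _
  have q : brk (s ^ 2) (s ^ 2 * bb) (-α) * brk s bb α
      = brk (s ^ 2) (s⁻¹ * (s ^ 2 * bb)) (-α) * brk s ((s ^ 2)⁻¹ * (s * bb)) α := by
    rw [brk_neg, brk_neg, neg_mul, neg_mul, neg_inj]
    apply quad_eq
    · field_simp
    · field_simp
    · simp only [mul_inv, inv_inv, ← inv_pow, hbi, hsi, hei]
      linear_combination (s*e^12 + (-1)*s*e^20 + bb^2*e^5 + (-1)*bb^2*e^25 + bb^2*s^2*e^11 + (-1)*bb^2*s^2*e^19 + bb^4*s*e^4 + (-1)*bb^4*s*e^24 + bb^4*s^3*e^10 + (-1)*bb^4*s^3*e^18 + (-1)*bb^6*s^2*e^23 + bb^6*s^4*e^9 + (-1)*bb^6*s^4*e^17 + (-1)*bb^8*s^3*e^22 + (-1)*bb^8*s^5*e^16 + (-1)*bb^10*s^4*e^21 + (-1)*bb^10*s^6*e^15 + (-1)*bb^12*s^5*e^20 + (-1)*bb^12*s^7*e^14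 + (-1)*bb^14*s^6*e^19 + (-1)*bb^16*s^7*e^18) * h + ((-1)*s*e^13 + (-1)*s*e^15 + (-1)*s*e^17 + (-1)*s*e^19 + (-1)*bb^2*e^6 + (-1)*bb^2*e^8 + (-1)*bb^2*e^10 + (-1)*bb^2*e^12 + (-1)*bb^2*e^14 + (-1)*bb^2*e^16 + (-1)*bb^2*e^18 + (-1)*bb^2*e^20 + (-1)*bb^2*e^22 + (-1)*bb^2*e^24) * he2
  linear_combination (brk s bb β * brk (s ^ 2) (s ^ 2 * bb) (-α)) * sw
    + (brk s bb β * brk (s ^ 2) (s * bb) α) * q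

lemma cubicN (ν : ι → ℤ) :
    brk s bb ν * (brk (s ^ 2) (s ^ 2 * bb) ν * brk (s ^ 2) bb (-ν))
      = brk s (s ^ 2 * bb) ν * (brk (s ^ 2) (s⁻¹ * (s ^ 2 * bb)) ν * brk (s ^ 2) (s * bb) (-ν)) := by
  have hbi := hbi_aux s bb e hs hb he2 h
  have hsi := hsi_aux s bb e hs hb he2 h
  have hei := hei_aux s bb e hs hb he2 h
  have sw : brk s bb ν * brk (s ^ 2) (s ^ 2 * bb) ν
      = brk s (s ^ 2 * bb) ν * brk (s ^ 2) bb ν := brk_swap _ _ _ _ _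
  have q : brk (s ^ 2) bb ν * brk (s ^ 2) bb (-ν)
      = brk (s ^ 2) (s⁻¹ * (s ^ 2 * bb)) ν * brk (s ^ 2) (s * bb) (-ν) := by
    rw [brk_neg, brk_neg, mul_neg, mul_neg, neg_inj]
    apply quad_eq
    · field_simp
    · field_simp
    · simp only [mul_inv, inv_inv, ← inv_pow, hbi, hsi, hei]
      linear_combination (s*e^2 + (-1)*s*e^10 + bb^2*e^3 + (-1)*bb^2*e^11 + (-1)*bb^2*s^2*e^9 + (-1)*bb^4*s*e^10 + (-1)*bb^4*s^3*e^8 + (-1)*bb^6*s^2*e^9 + (-1)*bb^6*s^4*e^7 + (-1)*bb^8*s^3*e^8) * h + ((-1)*s*e^3 + (-1)*s*e^5 + (-1)*s*e^7 + (-1)*s*e^9 + (-1)*bb^2*e^4 + (-1)*bb^2*e^6 + (-1)*bb^2*e^8 + (-1)*bb^2*e^10) * he2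
  linear_combination (brk (s ^ 2) bb (-ν)) * sw + (brk s (s ^ 2 * bb) ν) * q

lemma cubic01' (α' α β : ι → ℤ) (hα : α' = -α) :
    brk (s ^ 2) (s ^ 2 * bb) α' * brk (s ^ 2) bb α * (brk s (s * bb) α * brk s bb β)
      = brk (s ^ 2) (s⁻¹ * (s ^ 2 * bb)) α' * brk (s ^ 2) (s * bb) α *
          (brk s ((s ^ 2)⁻¹ * (s * bb)) α * brk s bb β) := by
  subst hα
  exact cubic01 s bb e hs hb he2 h α β

lemma cubicN' (ν ν' : ι → ℤ) (hν' : ν' = -ν) :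
    brk s bb ν * (brk (s ^ 2) (s ^ 2 * bb) ν * brk (s ^ 2) bb ν')
      = brk s (s ^ 2 * bb) ν * (brk (s ^ 2) (s⁻¹ * (s ^ 2 * bb)) ν * brk (s ^ 2) (s * bb) ν') := by
  subst hν'
  exact cubicN s bb e hs hb he2 h ν

end

lemma xsub_one {N : ℕ} (a bq k : Fin N) (h1 : (k : ℕ) = (a : ℕ)) (h2 : (k : ℕ) ≠ (bq : ℕ)) :
    (xvec a - xvec bq) k = 1 := by
  have ha : k = a := Fin.ext h1
  have hb : k ≠ bq := fun hh => h2 (congrArg Fin.val hh)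
  subst ha
  simp [xvec, hb]

lemma xsub_neg {N : ℕ} (a bq k : Fin N) (h1 : (k : ℕ) ≠ (a : ℕ)) (h2 : (k : ℕ) = (bq : ℕ)) :
    (xvec a - xvec bq) k = -1 := by
  have hb : k = bq := Fin.ext h2
  have ha : k ≠ a := fun hh => h1 (congrArg Fin.val hh)
  subst hb
  simp [xvec, ha]

lemma xsub_zero {N : ℕ} (a bq k : Fin N) (h1 : (k : ℕ) ≠ (a : ℕ)) (h2 : (k : ℕ) ≠ (bq : ℕ)) :
    (xvec a - xvec bq) k = 0 := by
  have ha : k ≠ a := fun hh => h1 (congrArg Fin.val hh)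
  have hb : k ≠ bq := fun hh => h2 (congrArg Fin.val hh)
  simp [xvec, ha, hb]

lemma far_pair {N : ℕ} {ci cj : ℂˣ} {ii jj : Fin N} {s1 s2 s3 s4 d1 d2 d3 d4 : ℂ}
    {μ1 μ2 μ3 μ4 : Fin N → ℤ}
    (h1 : μ1 jj = 0) (h2 : μ2 jj = 0) (h3 : μ3 ii = 0) (h4 : μ4 ii = 0) :
    brk s1 d1 μ1 * brk s2 d2 μ2 * (brk s3 d3 μ3 * brk s4 d4 μ4)
      = zeta cj jj (brk s1 d1 μ1 * brk s2 d2 μ2) * zeta ci ii (brk s3 d3 μ3 * brk s4 d4 μ4) := by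
  rw [map_mul, map_mul, zeta_brk_far _ _ _ _ _ h1, zeta_brk_far _ _ _ _ _ h2,
    zeta_brk_far _ _ _ _ _ h3, zeta_brk_far _ _ _ _ _ h4]

end ShiftAux
end

noncomputable section

open Complex ShiftAux

set_option maxHeartbeats 2000000

/-- For the affine Cartan matrix of type `C_n^{(1)}`, `n ≥ 2` (indexed by
`Fin (n+1)`, with `q_0 = q_n = p⁴` and `q_i = p²` otherwise), with `z_i = x_{i-1}⁻¹ x_i`
for `1 ≤ i ≤ n`, the tuple `φ_0 = {p⁴·b·z_1⁻¹}_0·{b·z_1}_0`,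
`φ_i = {p²·b·z_i}_i·{b·z_{i+1}}_i` (`1 ≤ i ≤ n−1`), `φ_n = {p⁴·b·z_n}_n·{b·z_n⁻¹}_n`
solves the shiftability system, for `b = p⁻¹` and for `b = ı·p⁻¹`. -/
theorem shiftability_Cn_aff (n : ℕ) (hn : 2 ≤ n)
    (p : ℂˣ) (hp : ∀ m : ℕ, 0 < m → p ^ m ≠ 1)
    (b : ℂ) (hb : b = (p : ℂ)⁻¹ ∨ b = Complex.I * (p : ℂ)⁻¹) :
    ShiftSystem
      (fun i j : Fin (n + 1) =>
        if i = j then 2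
        else if (i : ℕ) = 0 ∧ (j : ℕ) = 1 then -1
        else if (i : ℕ) = 1 ∧ (j : ℕ) = 0 then -2
        else if (i : ℕ) = n - 1 ∧ (j : ℕ) = n then -2
        else if (i : ℕ) = n ∧ (j : ℕ) = n - 1 then -1
        else if (j : ℕ) = (i : ℕ) + 1 ∨ (i : ℕ) = (j : ℕ) + 1 then -1
        else 0)
      (fun i : Fin (n + 1) => if (i : ℕ) = 0 ∨ (i : ℕ) = n then p ^ 4 else p ^ 2)
      (fun i : Fin (n + 1) =>
        if (i : ℕ) = 0 then
          brk ((p : ℂ) ^ 4) ((p : ℂ) ^ 4 * b) (xvec 0 - xvec 1) *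
            brk ((p : ℂ) ^ 4) b (xvec 1 - xvec 0)
        else if (i : ℕ) = n then
          brk ((p : ℂ) ^ 4) ((p : ℂ) ^ 4 * b) (xvec i - xvec (i - 1)) *
            brk ((p : ℂ) ^ 4) b (xvec (i - 1) - xvec i)
        else
          brk ((p : ℂ) ^ 2) ((p : ℂ) ^ 2 * b) (xvec i - xvec (i - 1)) *
            brk ((p : ℂ) ^ 2) b (xvec (i + 1) - xvec i)) := by
  have hp0 : (p : ℂ) ≠ 0 := Units.ne_zero p
  have hb0 : b ≠ 0 := by
    rcases hb with h | h <;> subst h <;> simp [hp0, Complex.I_ne_zero]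
  have hpm : ∀ m : ℕ, 0 < m → (p : ℂ) ^ m ≠ 1 := fun m hm hc =>
    hp m hm (Units.ext (by rw [Units.val_pow_eq_pow_val]; exact hc))
  have hq4 : ((p : ℂ) ^ 2) ^ 2 - 1 ≠ 0 :=
    sub_ne_zero.mpr (by rw [← pow_mul]; exact hpm 4 (by norm_num))
  have hq8 : ((p : ℂ) ^ 4) ^ 2 - 1 ≠ 0 :=
    sub_ne_zero.mpr (by rw [← pow_mul]; exact hpm 8 (by norm_num))
  have cast2 : ((p ^ 2 : ℂˣ) : ℂ) = (p : ℂ) ^ 2 := Units.val_pow_eq_pow_val p 2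
  have cast4 : ((p ^ 4 : ℂˣ) : ℂ) = (p : ℂ) ^ 4 := Units.val_pow_eq_pow_val p 4
  obtain ⟨ε, hε2, hbε⟩ : ∃ ε : ℂ, ε ^ 2 = 1 ∧ b ^ 2 * (p : ℂ) ^ 2 = ε := by
    rcases hb with h | h
    · exact ⟨1, by norm_num, by rw [h]; field_simp⟩
    · exact ⟨-1, by norm_num, by rw [h, mul_pow, Complex.I_sq]; field_simp⟩
  have v0 : ((0 : Fin (n + 1)) : ℕ) = 0 := rfl
  have v1 : ((1 : Fin (n + 1)) : ℕ) = 1 := by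
    rw [show ((1 : Fin (n + 1)) : ℕ) = 1 % (n + 1) from rfl, Nat.mod_eq_of_lt (by omega)]
  have v2 : ((2 : Fin (n + 1)) : ℕ) = 2 := by
    rw [show ((2 : Fin (n + 1)) : ℕ) = 2 % (n + 1) from rfl, Nat.mod_eq_of_lt (by omega)]
  have vadd : ∀ k : Fin (n + 1), (k : ℕ) ≠ n → ((k + 1 : Fin (n + 1)) : ℕ) = (k : ℕ) + 1 := by
    intro k hk
    rw [Fin.val_add_one, if_neg (fun h => hk (by rw [h, Fin.val_last]))]
  have vsub : ∀ k : Fin (n + 1), (k : ℕ) ≠ 0 → ((k - 1 : Fin (n + 1)) : ℕ) = (k : ℕ) - 1 := by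
    intro k hk
    rw [Fin.coe_sub_one, if_neg (fun h => hk (by rw [h]; rfl))]
  refine ⟨?_, ?_⟩
  · -- equation (1)
    intro i
    beta_reduce
    have hilt := i.isLt
    by_cases hi0 : (i : ℕ) = 0
    · have hiF : i = 0 := Fin.ext (by omega)
      subst hiF
      rw [if_pos v0, if_pos (Or.inl v0)]
      have hcol : (fun k : Fin (n + 1) =>
          if k = 0 then (2 : ℤ)
          else if (k : ℕ) = 0 ∧ ((0 : Fin (n + 1)) : ℕ) = 1 then -1
          else if (k : ℕ) = 1 ∧ ((0 : Fin (n + 1)) : ℕ) = 0 then -2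
          else if (k : ℕ) = n - 1 ∧ ((0 : Fin (n + 1)) : ℕ) = n then -2
          else if (k : ℕ) = n ∧ ((0 : Fin (n + 1)) : ℕ) = n - 1 then -1
          else if ((0 : Fin (n + 1)) : ℕ) = (k : ℕ) + 1 ∨ (k : ℕ) = ((0 : Fin (n + 1)) : ℕ) + 1 then -1
          else 0)
          = (xvec 0 - xvec 1) + -(xvec (1 : Fin (n + 1)) - xvec 0) := by
        funext k
        have hklt := k.isLt
        simp only [Pi.add_apply, Pi.neg_apply, Pi.sub_apply, xvec, Fin.ext_iff, v0, v1,
            and_true, and_false, true_and, false_and, or_false, false_or]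
        split_ifs <;> first
          | omega
          | (simp_all only [false_or, or_false, and_false, false_and]; try omega)
      rw [hcol, ← cast4]
      exact eq1 (p ^ 4) 0 b hb0 (by rw [cast4]; exact hq8) _ _
        (xsub_one _ _ _ (by omega) (by omega)) (xsub_neg _ _ _ (by omega) (by omega))
    · by_cases hin : (i : ℕ) = n
      · have vmi := vsub i hi0
        rw [if_neg hi0, if_pos hin, if_pos (Or.inr hin)]
        have hcol : (fun k : Fin (n + 1) =>
            if k = i then (2 : ℤ)
            else if (k : ℕ) = 0 ∧ (i : ℕ) = 1 then -1
            else if (k : ℕ) = 1 ∧ (i : ℕ) = 0 then -2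
            else if (k : ℕ) = n - 1 ∧ (i : ℕ) = n then -2
            else if (k : ℕ) = n ∧ (i : ℕ) = n - 1 then -1
            else if (i : ℕ) = (k : ℕ) + 1 ∨ (k : ℕ) = (i : ℕ) + 1 then -1
            else 0)
            = (xvec i - xvec (i - 1)) + -(xvec (i - 1) - xvec i) := by
          funext k
          have hklt := k.isLt
          simp only [Pi.add_apply, Pi.neg_apply, Pi.sub_apply, xvec, Fin.ext_iff, v0, v1,
            and_true, and_false, true_and, false_and, or_false, false_or]
          split_ifs <;> first
            | omega
            | (simp_all only [false_or, or_false, and_false, false_and]; try omega)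
        rw [hcol, ← cast4]
        exact eq1 (p ^ 4) i b hb0 (by rw [cast4]; exact hq8) _ _
          (xsub_one _ _ _ (by omega) (by omega)) (xsub_neg _ _ _ (by omega) (by omega))
      · have vmi := vsub i hi0
        have vpi := vadd i hin
        rw [if_neg hi0, if_neg hin, if_neg (show ¬((i : ℕ) = 0 ∨ (i : ℕ) = n) by omega)]
        have hcol : (fun k : Fin (n + 1) =>
            if k = i then (2 : ℤ)
            else if (k : ℕ) = 0 ∧ (i : ℕ) = 1 then -1
            else if (k : ℕ) = 1 ∧ (i : ℕ) = 0 then -2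
            else if (k : ℕ) = n - 1 ∧ (i : ℕ) = n then -2
            else if (k : ℕ) = n ∧ (i : ℕ) = n - 1 then -1
            else if (i : ℕ) = (k : ℕ) + 1 ∨ (k : ℕ) = (i : ℕ) + 1 then -1
            else 0)
            = (xvec i - xvec (i - 1)) + -(xvec (i + 1) - xvec i) := by
          funext k
          have hklt := k.isLt
          simp only [Pi.add_apply, Pi.neg_apply, Pi.sub_apply, xvec, Fin.ext_iff, v0, v1,
            and_true, and_false, true_and, false_and, or_false, false_or]
          split_ifs <;> first
            | omega
            | (simp_all only [false_or, or_false, and_false, false_and]; try omega)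
        rw [hcol, ← cast2]
        exact eq1 (p ^ 2) i b hb0 (by rw [cast2]; exact hq4) _ _
          (xsub_one _ _ _ (by omega) (by omega)) (xsub_neg _ _ _ (by omega) (by omega))
  · -- equation (2)
    intro i j hij
    beta_reduce
    have hvij : (i : ℕ) ≠ (j : ℕ) := fun h => hij (Fin.ext h)
    have hilt := i.isLt
    have hjlt := j.isLt
    by_cases hA : (j : ℕ) = (i : ℕ) + 1
    · by_cases hi0 : (i : ℕ) = 0
      · -- pair (0,1)
        have hiF : i = 0 := Fin.ext (by omega)
        have hjF : j = 1 := Fin.ext (by omega)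
        subst hiF hjF
        rw [if_pos v0, if_pos (Or.inl v0),
          if_neg (show ¬((1 : Fin (n + 1)) : ℕ) = 0 by omega),
          if_neg (show ¬((1 : Fin (n + 1)) : ℕ) = n by omega),
          if_neg (show ¬(((1 : Fin (n + 1)) : ℕ) = 0 ∨ ((1 : Fin (n + 1)) : ℕ) = n) by omega),
          show (1 : Fin (n + 1)) - 1 = 0 from sub_self 1,
          show (1 : Fin (n + 1)) + 1 = 2 from Fin.ext (by rw [vadd 1 (by omega)]; omega)]
        rw [map_mul, map_mul,
          zeta_inv_brk_negone _ _ _ _ _ (xsub_neg (0 : Fin (n + 1)) 1 1 (by omega) (by omega)),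
          zeta_inv_brk_one _ _ _ _ _ (xsub_one (1 : Fin (n + 1)) 0 1 (by omega) (by omega)),
          zeta_inv_brk_negone _ _ _ _ _ (xsub_neg (1 : Fin (n + 1)) 0 0 (by omega) (by omega)),
          zeta_brk_far _ _ _ _ _ (xsub_zero (2 : Fin (n + 1)) 1 0 (by omega) (by omega))]
        simp only [Units.val_pow_eq_pow_val]
        rw [show ((p : ℂ) ^ 4) = ((p : ℂ) ^ 2) ^ 2 from by ring]
        exact cubic01' ((p : ℂ) ^ 2) b ε (pow_ne_zero 2 hp0) hb0 hε2 hbε _ _ _ (by rw [neg_sub])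
      · by_cases hjn : (j : ℕ) = n
        · -- pair (n-1, n)
          have hin' : (i : ℕ) ≠ n := by omega
          have hj0' : (j : ℕ) ≠ 0 := by omega
          have vmi := vsub i hi0
          have vmj := vsub j hj0'
          have hip : i + 1 = j := Fin.ext (by rw [vadd i hin']; omega)
          have hjm : j - 1 = i := Fin.ext (by omega)
          rw [if_neg hi0, if_neg hin', if_neg hj0', if_pos hjn, if_pos (Or.inr hjn),
            if_neg (show ¬((i : ℕ) = 0 ∨ (i : ℕ) = n) by omega), hip, hjm]
          rw [map_mul, map_mul,
            zeta_brk_far _ _ _ _ _ (xsub_zero i (i - 1) j (by omega) (by omega)),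
            zeta_inv_brk_one _ _ _ _ _ (xsub_one j i j (by omega) (by omega)),
            zeta_inv_brk_negone _ _ _ _ _ (xsub_neg j i i (by omega) (by omega)),
            zeta_inv_brk_one _ _ _ _ _ (xsub_one i j i (by omega) (by omega))]
          simp only [Units.val_pow_eq_pow_val]
          rw [show ((p : ℂ) ^ 4) = ((p : ℂ) ^ 2) ^ 2 from by ring]
          linear_combination (brk ((p : ℂ) ^ 2) ((p : ℂ) ^ 2 * b) (xvec i - xvec (i - 1))) *
            cubicN' ((p : ℂ) ^ 2) b ε (pow_ne_zero 2 hp0) hb0 hε2 hbε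
              (xvec j - xvec i) (xvec i - xvec j) (by rw [neg_sub])
        · -- middle-middle, j = i+1
          have hin' : (i : ℕ) ≠ n := by omega
          have hj0' : (j : ℕ) ≠ 0 := by omega
          have vmi := vsub i hi0
          have vpj := vadd j hjn
          have hip : i + 1 = j := Fin.ext (by rw [vadd i hin']; omega)
          have hjm : j - 1 = i := Fin.ext (by rw [vsub j hj0']; omega)
          rw [if_neg hi0, if_neg hin', if_neg hj0', if_neg hjn,
            if_neg (show ¬((i : ℕ) = 0 ∨ (i : ℕ) = n) by omega),
            if_neg (show ¬((j : ℕ) = 0 ∨ (j : ℕ) = n) by omega), hip, hjm]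
          rw [map_mul, map_mul,
            zeta_brk_far _ _ _ _ _ (xsub_zero i (i - 1) j (by omega) (by omega)),
            zeta_inv_brk_one _ _ _ _ _ (xsub_one j i j (by omega) (by omega)),
            zeta_inv_brk_negone _ _ _ _ _ (xsub_neg j i i (by omega) (by omega)),
            zeta_brk_far _ _ _ _ _ (xsub_zero (j + 1) j i (by omega) (by omega))]
          simp only [Units.val_pow_eq_pow_val]
          rw [inv_mul_cancel_left₀ (pow_ne_zero 2 hp0) b]
          ring
    · by_cases hB : (i : ℕ) = (j : ℕ) + 1
      · by_cases hj0 : (j : ℕ) = 0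
        · -- pair (1,0)
          have hiF : i = 1 := Fin.ext (by omega)
          have hjF : j = 0 := Fin.ext (by omega)
          subst hiF hjF
          rw [if_pos v0, if_pos (Or.inl v0),
            if_neg (show ¬((1 : Fin (n + 1)) : ℕ) = 0 by omega),
            if_neg (show ¬((1 : Fin (n + 1)) : ℕ) = n by omega),
            if_neg (show ¬(((1 : Fin (n + 1)) : ℕ) = 0 ∨ ((1 : Fin (n + 1)) : ℕ) = n) by omega),
            show (1 : Fin (n + 1)) - 1 = 0 from sub_self 1,
            show (1 : Fin (n + 1)) + 1 = 2 from Fin.ext (by rw [vadd 1 (by omega)]; omega)]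
          rw [map_mul, map_mul,
            zeta_inv_brk_negone _ _ _ _ _ (xsub_neg (0 : Fin (n + 1)) 1 1 (by omega) (by omega)),
            zeta_inv_brk_one _ _ _ _ _ (xsub_one (1 : Fin (n + 1)) 0 1 (by omega) (by omega)),
            zeta_inv_brk_negone _ _ _ _ _ (xsub_neg (1 : Fin (n + 1)) 0 0 (by omega) (by omega)),
            zeta_brk_far _ _ _ _ _ (xsub_zero (2 : Fin (n + 1)) 1 0 (by omega) (by omega))]
          simp only [Units.val_pow_eq_pow_val]
          rw [show ((p : ℂ) ^ 4) = ((p : ℂ) ^ 2) ^ 2 from by ring]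
          linear_combination cubic01' ((p : ℂ) ^ 2) b ε (pow_ne_zero 2 hp0) hb0 hε2 hbε
            (xvec (0 : Fin (n + 1)) - xvec 1) (xvec (1 : Fin (n + 1)) - xvec 0)
            (xvec (2 : Fin (n + 1)) - xvec 1) (by rw [neg_sub])
        · by_cases hin : (i : ℕ) = n
          · -- pair (n, n-1)
            have hi0' : (i : ℕ) ≠ 0 := by omega
            have hjn' : (j : ℕ) ≠ n := by omega
            have vmj := vsub j hj0
            have hjp : j + 1 = i := Fin.ext (by rw [vadd j hjn']; omega)
            have him : i - 1 = j := Fin.ext (by rw [vsub i hi0']; omega)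
            rw [if_neg hi0', if_pos hin, if_pos (Or.inr hin), if_neg hj0, if_neg hjn',
              if_neg (show ¬((j : ℕ) = 0 ∨ (j : ℕ) = n) by omega), hjp, him]
            rw [map_mul, map_mul,
              zeta_inv_brk_negone _ _ _ _ _ (xsub_neg i j j (by omega) (by omega)),
              zeta_inv_brk_one _ _ _ _ _ (xsub_one j i j (by omega) (by omega)),
              zeta_brk_far _ _ _ _ _ (xsub_zero j (j - 1) i (by omega) (by omega)),
              zeta_inv_brk_one _ _ _ _ _ (xsub_one i j i (by omega) (by omega))]
            simp only [Units.val_pow_eq_pow_val]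
            rw [show ((p : ℂ) ^ 4) = ((p : ℂ) ^ 2) ^ 2 from by ring]
            linear_combination (brk ((p : ℂ) ^ 2) ((p : ℂ) ^ 2 * b) (xvec j - xvec (j - 1))) *
              cubicN' ((p : ℂ) ^ 2) b ε (pow_ne_zero 2 hp0) hb0 hε2 hbε
                (xvec i - xvec j) (xvec j - xvec i) (by rw [neg_sub])
          · -- middle-middle, i = j+1
            have hi0' : (i : ℕ) ≠ 0 := by omega
            have hjn' : (j : ℕ) ≠ n := by omega
            have vmj := vsub j hj0
            have vpi := vadd i hin
            have hjp : j + 1 = i := Fin.ext (by rw [vadd j hjn']; omega)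
            have him : i - 1 = j := Fin.ext (by rw [vsub i hi0']; omega)
            rw [if_neg hi0', if_neg hin, if_neg hj0, if_neg hjn',
              if_neg (show ¬((i : ℕ) = 0 ∨ (i : ℕ) = n) by omega),
              if_neg (show ¬((j : ℕ) = 0 ∨ (j : ℕ) = n) by omega), hjp, him]
            rw [map_mul, map_mul,
              zeta_inv_brk_negone _ _ _ _ _ (xsub_neg i j j (by omega) (by omega)),
              zeta_brk_far _ _ _ _ _ (xsub_zero (i + 1) i j (by omega) (by omega)),
              zeta_brk_far _ _ _ _ _ (xsub_zero j (j - 1) i (by omega) (by omega)),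
              zeta_inv_brk_one _ _ _ _ _ (xsub_one i j i (by omega) (by omega))]
            simp only [Units.val_pow_eq_pow_val]
            rw [inv_mul_cancel_left₀ (pow_ne_zero 2 hp0) b]
            ring
      · -- far case
        have hφ : ∀ k : Fin (n + 1), ∃ a1 b1 a2 b2 : Fin (n + 1), ∃ s1 d1 d2 : ℂ,
            (if (k : ℕ) = 0 then
              brk ((p : ℂ) ^ 4) ((p : ℂ) ^ 4 * b) (xvec 0 - xvec 1) *
                brk ((p : ℂ) ^ 4) b (xvec 1 - xvec 0)
            else if (k : ℕ) = n then
              brk ((p : ℂ) ^ 4) ((p : ℂ) ^ 4 * b) (xvec k - xvec (k - 1)) *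
                brk ((p : ℂ) ^ 4) b (xvec (k - 1) - xvec k)
            else
              brk ((p : ℂ) ^ 2) ((p : ℂ) ^ 2 * b) (xvec k - xvec (k - 1)) *
                brk ((p : ℂ) ^ 2) b (xvec (k + 1) - xvec k))
            = brk s1 d1 (xvec a1 - xvec b1) * brk s1 d2 (xvec a2 - xvec b2)
            ∧ (a1 : ℕ) ≤ (k : ℕ) + 1 ∧ (k : ℕ) ≤ (a1 : ℕ) + 1
            ∧ (b1 : ℕ) ≤ (k : ℕ) + 1 ∧ (k : ℕ) ≤ (b1 : ℕ) + 1
            ∧ (a2 : ℕ) ≤ (k : ℕ) + 1 ∧ (k : ℕ) ≤ (a2 : ℕ) + 1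
            ∧ (b2 : ℕ) ≤ (k : ℕ) + 1 ∧ (k : ℕ) ≤ (b2 : ℕ) + 1 := by
          intro k
          by_cases hk0 : (k : ℕ) = 0
          · exact ⟨0, 1, 1, 0, _, _, _, by rw [if_pos hk0], by omega, by omega, by omega,
              by omega, by omega, by omega, by omega, by omega⟩
          · by_cases hkn : (k : ℕ) = n
            · have vmk := vsub k hk0
              exact ⟨k, k - 1, k - 1, k, _, _, _, by rw [if_neg hk0, if_pos hkn], by omega,
                by omega, by omega, by omega, by omega, by omega, by omega, by omega⟩
            · have vmk := vsub k hk0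
              have vpk := vadd k hkn
              exact ⟨k, k - 1, k + 1, k, _, _, _, by rw [if_neg hk0, if_neg hkn], by omega,
                by omega, by omega, by omega, by omega, by omega, by omega, by omega⟩
        obtain ⟨a1, b1, a2, b2, s1, d1, d2, heqi, ha1, ha1', hb1, hb1', ha2, ha2', hb2, hb2'⟩ := hφ i
        obtain ⟨a3, b3, a4, b4, s3, d3, d4, heqj, ha3, ha3', hb3, hb3', ha4, ha4', hb4, hb4'⟩ := hφ j
        rw [heqi, heqj]
        have hfar : (i : ℕ) + 2 ≤ (j : ℕ) ∨ (j : ℕ) + 2 ≤ (i : ℕ) := by omega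
        exact far_pair
          (xsub_zero a1 b1 j (by omega) (by omega))
          (xsub_zero a2 b2 j (by omega) (by omega))
          (xsub_zero a3 b3 i (by omega) (by omega))
          (xsub_zero a4 b4 i (by omega) (by omega))

end
end

section
/- Let I = {1,2} and let A be the Cartan matrix of type G_2: a_{11} = a_{22} = 2, a_{12} = -3, a_{21} = -1; set q_1 = p and q_2 = p^3. Then there exists no pair (φ_1, φ_2) ∈ 𝒜 × 𝒜 satisfying the shiftability system for A, i.e. there are no Laurent polynomials φ_1, φ_2 with ζ_1(φ_1) − φ_1 = {y_1}_1, ζ_2(φ_2) − φ_2 = {y_2}_2, and φ_1 φ_2 = ζ_2^{-1}(φ_1)·ζ_1^{-1}(φ_2). -/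
noncomputable section Helpers

instance inst_s8 {ι : Type*} : CoeFun (LaurentAlg ι) (fun _ => (ι → ℤ) → ℂ) := ⟨fun f => f.coeff⟩

def vv (a b : ℤ) : Fin 2 → ℤ := fun j => if j = 0 then a else b
@[simp] lemma vv_zero (a b : ℤ) : vv a b 0 = a := rfl
@[simp] lemma vv_one (a b : ℤ) : vv a b 1 = b := rfl
lemma eq_vv (μ : Fin 2 → ℤ) : μ = vv (μ 0) (μ 1) := by
  funext j; fin_cases j <;> simp [vv]
lemma vv_eq_iff {a b c d : ℤ} : vv a b = vv c d ↔ a = c ∧ b = d := by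
  constructor
  · intro h; exact ⟨congrFun h 0, congrFun h 1⟩
  · rintro ⟨rfl, rfl⟩; rfl
lemma vv_sub (a b c d : ℤ) : vv a b - vv c d = vv (a - c) (b - d) := by
  funext j; fin_cases j <;> simp [vv]
lemma vv_neg (a b : ℤ) : -vv a b = vv (-a) (-b) := by
  funext j; fin_cases j <;> simp [vv]

lemma zeta_coeff {ι : Type*} (c : ℂˣ) (i : ι) (a : LaurentAlg ι) (μ : ι → ℤ) :
    (zeta c i a) μ = ((c ^ (-(μ i)) : ℂˣ) : ℂ) * a μ := by
  classical
  show (zeta c i a).coeff μ = _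
  rw [zeta, AddMonoidAlgebra.lift_apply, AddMonoidAlgebra.coeff_finsuppSum, Finsupp.sum_apply,
    Finsupp.sum_eq_single μ]
  · simp [zetaHom, mono, AddMonoidAlgebra.coeff_smul, AddMonoidAlgebra.coeff_single, Finsupp.single_apply, mul_comm]
  · intro ν _ hne
    simp [zetaHom, mono, AddMonoidAlgebra.coeff_smul, AddMonoidAlgebra.coeff_single, Finsupp.single_apply, hne]
  · intro _; simp

lemma brk_coeff (s : ℂ) (μ ν : Fin 2 → ℤ) :
    (brk s 1 μ : LaurentAlg (Fin 2)) ν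
      = (s - s⁻¹)⁻¹ * ((if μ = ν then 1 else 0) - (if (-μ : Fin 2 → ℤ) = ν then 1 else 0)) := by
  classical
  have h1 : (AddMonoidAlgebra.single μ (1:ℂ)).coeff ν = if μ = ν then 1 else 0 :=
    Finsupp.single_apply
  have h2 : (AddMonoidAlgebra.single (-μ) (1:ℂ)).coeff ν = if (-μ : Fin 2 → ℤ) = ν then 1 else 0 :=
    Finsupp.single_apply
  show (((s - s⁻¹)⁻¹ • ((1:ℂ) • AddMonoidAlgebra.single μ (1:ℂ)
      - (1:ℂ)⁻¹ • AddMonoidAlgebra.single (-μ) (1:ℂ))).coeff : (Fin 2 → ℤ) →₀ ℂ) ν = _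
  rw [AddMonoidAlgebra.coeff_smul, AddMonoidAlgebra.coeff_sub, AddMonoidAlgebra.coeff_smul, AddMonoidAlgebra.coeff_smul, Finsupp.smul_apply, Finsupp.sub_apply, Finsupp.smul_apply, Finsupp.smul_apply, h1, h2]
  simp

lemma mul_coeff (f g : LaurentAlg (Fin 2)) (x : Fin 2 → ℤ) :
    (f * g) x = f.coeff.sum fun a b => b * g (x - a) := by
  classical
  rw [show (f * g) x = (f * g).coeff x from rfl, AddMonoidAlgebra.coeff_mul]
  refine Finsupp.sum_congr (fun a _ => ?_)
  rw [Finsupp.sum, Finset.sum_eq_single (x - a)]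
  · simp
  · intro b _ hb
    have h2 : ¬ (a + b = x) := fun h => hb (by rw [← h]; abel)
    simp [h2]
  · intro h
    have h2 : g (x - a) = 0 := Finsupp.notMem_support_iff.mp h
    simp [h2]

lemma mul_coeff' (f g : LaurentAlg (Fin 2)) (S : Finset (Fin 2 → ℤ))
    (hS : f.coeff.support ⊆ S) (x : Fin 2 → ℤ) :
    (f * g) x = ∑ a ∈ S, f a * g (x - a) := by
  classical
  rw [mul_coeff, Finsupp.sum]
  refine Finset.sum_subset hS (fun a _ ha => ?_)
  have : f a = 0 := Finsupp.notMem_support_iff.mp ha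
  simp [this]

lemma exists_max_aux (h : ℤ → ℂ) (T : Finset ℤ) (hT : ∀ m, h m ≠ 0 → m ∈ T)
    (N m0 : ℤ) (hm0 : N ≤ m0) (h0 : h m0 ≠ 0) :
    ∃ M, N ≤ M ∧ h M ≠ 0 ∧ ∀ m, M < m → h m = 0 := by
  classical
  have hne : (T.filter (fun m => N ≤ m ∧ h m ≠ 0)).Nonempty :=
    ⟨m0, Finset.mem_filter.mpr ⟨hT m0 h0, hm0, h0⟩⟩
  have hmem := Finset.max'_mem _ hne
  rw [Finset.mem_filter] at hmem
  refine ⟨_, hmem.2.1, hmem.2.2, ?_⟩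
  intro m hm
  by_contra hzm
  have hNm : N ≤ m := le_trans hmem.2.1 (le_of_lt hm)
  have hmS : m ∈ T.filter (fun m => N ≤ m ∧ h m ≠ 0) :=
    Finset.mem_filter.mpr ⟨hT m hzm, hNm, hzm⟩
  exact absurd (Finset.le_max' _ m hmS) (not_le.mpr hm)

end Helpers

noncomputable section

/-- For the Cartan matrix of type `G_2` (indexed by `Fin 2`, `a_{12} = -3`,
`a_{21} = -1`, `q_1 = p`, `q_2 = p³`), the shiftability system has no solution: there are
no Laurent polynomials `φ_1, φ_2` with `ζ_1(φ_1) − φ_1 = {y_1}_1`,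
`ζ_2(φ_2) − φ_2 = {y_2}_2` and `φ_1φ_2 = ζ_2⁻¹(φ_1)·ζ_1⁻¹(φ_2)`. -/


theorem no_shiftability_G2 (p : ℂˣ) (hp : ∀ m : ℕ, 0 < m → p ^ m ≠ 1) :
    ¬ ∃ φ₁ φ₂ : LaurentAlg (Fin 2),
        zeta p 0 φ₁ - φ₁ =
            brk (p : ℂ) 1 (fun j : Fin 2 => if j = 0 then 2 else -1) ∧
        zeta (p ^ 3) 1 φ₂ - φ₂ =
            brk ((p : ℂ) ^ 3) 1 (fun j : Fin 2 => if j = 0 then -3 else 2) ∧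
        φ₁ * φ₂ = zeta (p ^ 3)⁻¹ 1 φ₁ * zeta p⁻¹ 0 φ₂ := by
  rintro ⟨φ₁, φ₂, h1, h2, h3⟩
  classical
  set Pz : ℤ → ℂ := fun n => ((p ^ n : ℂˣ) : ℂ) with hPzdef
  have hpz : ∀ n : ℤ, Pz n = 1 → n = 0 := by
    intro n hn
    by_contra h0
    have hu : (p : ℂˣ) ^ n = 1 := Units.ext (by simpa [hPzdef] using hn)
    rcases lt_or_gt_of_ne h0 with h | h
    · have hu2 : p ^ (-n).toNat = 1 := by
        have hh : ((-n).toNat : ℤ) = -n := Int.toNat_of_nonneg (by omega)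
        rw [← zpow_natCast, hh, zpow_neg, hu, inv_one]
      exact hp (-n).toNat (by omega) hu2
    · have hu2 : p ^ n.toNat = 1 := by
        have hh : (n.toNat : ℤ) = n := Int.toNat_of_nonneg (by omega)
        rw [← zpow_natCast, hh]; exact hu
      exact hp n.toNat (by omega) hu2
  have hEn : ∀ n : ℤ, n ≠ 0 → 1 - Pz n ≠ 0 := by
    intro n h0 h
    exact h0 (hpz n (sub_eq_zero.mp h).symm)
  have hPz0 : Pz 0 = 1 := by simp [hPzdef]
  -- structure of φ₁
  have hc1 : ∀ μ : Fin 2 → ℤ, (Pz (-(μ 0)) - 1) * φ₁ μ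
      = ((p:ℂ) - (p:ℂ)⁻¹)⁻¹ *
        ((if vv 2 (-1) = μ then 1 else 0) - (if vv (-2) 1 = μ then 1 else 0)) := by
    intro μ
    have hfs : (zeta p 0 φ₁ - φ₁) μ
        = (brk (p : ℂ) 1 (fun j : Fin 2 => if j = 0 then 2 else -1)) μ := by rw [h1]
    have hL : (zeta p 0 φ₁ - φ₁) μ = (zeta p 0 φ₁) μ - φ₁ μ := rfl
    have huv : (fun j : Fin 2 => if j = 0 then (2:ℤ) else -1) = vv 2 (-1) := rfl
    rw [hL, zeta_coeff, huv, brk_coeff] at hfs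
    have hneg : (-(vv 2 (-1)) : Fin 2 → ℤ) = vv (-2) 1 := by rw [vv_neg]; norm_num
    rw [hneg] at hfs
    have hthis : ((p ^ (-(μ 0)) : ℂˣ) : ℂ) = Pz (-(μ 0)) := rfl
    rw [hthis] at hfs
    rw [← hfs]; ring
  have ht1 : ((p:ℂ) - (p:ℂ)⁻¹)⁻¹ ≠ 0 := by
    apply inv_ne_zero
    intro h
    have hpc : (p:ℂ) ≠ 0 := Units.ne_zero p
    have hpe : (p:ℂ) = (p:ℂ)⁻¹ := sub_eq_zero.mp h
    have h2c : (p:ℂ) * (p:ℂ) = 1 := by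
      calc (p:ℂ) * (p:ℂ) = (p:ℂ) * (p:ℂ)⁻¹ := by rw [← hpe]
        _ = 1 := mul_inv_cancel₀ hpc
    have : (p ^ 2 : ℂˣ) = 1 := Units.ext (by push_cast; rw [sq]; exact h2c)
    exact hp 2 (by norm_num) this
  have hα : φ₁ (vv 2 (-1)) ≠ 0 := by
    intro h
    have h5 := hc1 (vv 2 (-1))
    have hif : ¬ ((vv (-2) 1 : Fin 2 → ℤ) = vv 2 (-1)) := by rw [vv_eq_iff]; omega
    rw [h, mul_zero, if_pos rfl, if_neg hif] at h5
    exact ht1 (by linear_combination -h5)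
  have hβ : φ₁ (vv (-2) 1) ≠ 0 := by
    intro h
    have h5 := hc1 (vv (-2) 1)
    have hif : ¬ ((vv 2 (-1) : Fin 2 → ℤ) = vv (-2) 1) := by rw [vv_eq_iff]; omega
    rw [h, mul_zero, if_neg hif, if_pos rfl] at h5
    exact ht1 (by linear_combination h5)
  have hz1 : ∀ μ : Fin 2 → ℤ, μ 0 ≠ 0 → μ ≠ vv 2 (-1) → μ ≠ vv (-2) 1 → φ₁ μ = 0 := by
    intro μ hμ0 hμ1 hμ2
    have h5 := hc1 μ
    rw [if_neg (Ne.symm hμ1), if_neg (Ne.symm hμ2)] at h5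
    have hfac : Pz (-(μ 0)) - 1 ≠ 0 := by
      intro h
      exact hμ0 (by have := hpz (-(μ 0)) (by linear_combination h); omega)
    have : (Pz (-(μ 0)) - 1) * φ₁ μ = 0 := by rw [h5]; ring
    rcases mul_eq_zero.mp this with h | h
    · exact absurd h hfac
    · exact h
  -- structure of φ₂
  have hc2 : ∀ ν : Fin 2 → ℤ, (Pz (-(3 * ν 1)) - 1) * φ₂ ν
      = ((p:ℂ)^3 - ((p:ℂ)^3)⁻¹)⁻¹ *
        ((if vv (-3) 2 = ν then 1 else 0) - (if vv 3 (-2) = ν then 1 else 0)) := by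
    intro ν
    have hfs : (zeta (p^3) 1 φ₂ - φ₂) ν
        = (brk ((p : ℂ)^3) 1 (fun j : Fin 2 => if j = 0 then -3 else 2)) ν := by rw [h2]
    have hL : (zeta (p^3) 1 φ₂ - φ₂) ν = (zeta (p^3) 1 φ₂) ν - φ₂ ν := rfl
    have huv : (fun j : Fin 2 => if j = 0 then (-3:ℤ) else 2) = vv (-3) 2 := rfl
    rw [hL, zeta_coeff, huv, brk_coeff] at hfs
    have hneg : (-(vv (-3) 2) : Fin 2 → ℤ) = vv 3 (-2) := by rw [vv_neg]; norm_num
    rw [hneg] at hfs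
    have hthis : (((p^3) ^ (-(ν 1)) : ℂˣ) : ℂ) = Pz (-(3 * ν 1)) := by
      show (((p^(3:ℕ)) ^ (-(ν 1)) : ℂˣ) : ℂ) = ((p ^ (-(3 * ν 1)) : ℂˣ) : ℂ)
      congr 1
      rw [← zpow_natCast p 3, ← zpow_mul]
      congr 1
      push_cast
      ring
    rw [hthis] at hfs
    rw [← hfs]; ring
  have ht2 : ((p:ℂ)^3 - ((p:ℂ)^3)⁻¹)⁻¹ ≠ 0 := by
    apply inv_ne_zero
    intro h
    have hpc : (p:ℂ)^3 ≠ 0 := pow_ne_zero 3 (Units.ne_zero p)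
    have hpe : (p:ℂ)^3 = ((p:ℂ)^3)⁻¹ := sub_eq_zero.mp h
    have h2c : (p:ℂ)^3 * (p:ℂ)^3 = 1 := by
      calc (p:ℂ)^3 * (p:ℂ)^3 = (p:ℂ)^3 * ((p:ℂ)^3)⁻¹ := by rw [← hpe]
        _ = 1 := mul_inv_cancel₀ hpc
    have : (p ^ 6 : ℂˣ) = 1 := Units.ext (by push_cast; ring_nf; ring_nf at h2c; linear_combination h2c)
    exact hp 6 (by norm_num) this
  have hγ : φ₂ (vv (-3) 2) ≠ 0 := by
    intro h
    have h5 := hc2 (vv (-3) 2)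
    have hif : ¬ ((vv 3 (-2) : Fin 2 → ℤ) = vv (-3) 2) := by rw [vv_eq_iff]; omega
    rw [h, mul_zero, if_pos rfl, if_neg hif] at h5
    exact ht2 (by linear_combination -h5)
  have hδ : φ₂ (vv 3 (-2)) ≠ 0 := by
    intro h
    have h5 := hc2 (vv 3 (-2))
    have hif : ¬ ((vv (-3) 2 : Fin 2 → ℤ) = vv 3 (-2)) := by rw [vv_eq_iff]; omega
    rw [h, mul_zero, if_neg hif, if_pos rfl] at h5
    exact ht2 (by linear_combination h5)
  have hz2 : ∀ ν : Fin 2 → ℤ, ν 1 ≠ 0 → ν ≠ vv (-3) 2 → ν ≠ vv 3 (-2) → φ₂ ν = 0 := by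
    intro ν hν0 hν1 hν2
    have h5 := hc2 ν
    rw [if_neg (Ne.symm hν1), if_neg (Ne.symm hν2)] at h5
    have hfac : Pz (-(3 * ν 1)) - 1 ≠ 0 := by
      intro h
      exact hν0 (by have := hpz (-(3 * ν 1)) (by linear_combination h); omega)
    have : (Pz (-(3 * ν 1)) - 1) * φ₂ ν = 0 := by rw [h5]; ring
    rcases mul_eq_zero.mp this with h | h
    · exact absurd h hfac
    · exact h
  have hEv2 : ∀ aa bb : ℤ, bb ≠ 0 → ¬(aa = -3 ∧ bb = 2) → ¬(aa = 3 ∧ bb = -2) →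
      φ₂ (vv aa bb) = 0 := by
    intro aa bb h0 hv hnv
    apply hz2
    · exact h0
    · intro h; rw [vv_eq_iff] at h; exact hv h
    · intro h; rw [vv_eq_iff] at h; exact hnv h
  -- master equation
  have hz1c : ∀ μ : Fin 2 → ℤ, (zeta (p^3)⁻¹ 1 φ₁) μ = Pz (3 * μ 1) * φ₁ μ := by
    intro μ
    rw [zeta_coeff]
    congr 1
    show (((p^3)⁻¹ ^ (-(μ 1)) : ℂˣ) : ℂ) = ((p ^ (3 * μ 1) : ℂˣ) : ℂ)
    congr 1
    rw [inv_zpow, ← zpow_neg, neg_neg, ← zpow_natCast p 3, ← zpow_mul]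
    norm_num
  have hz2c : ∀ ν : Fin 2 → ℤ, (zeta p⁻¹ 0 φ₂) ν = Pz (ν 0) * φ₂ ν := by
    intro ν
    rw [zeta_coeff]
    congr 1
    show ((p⁻¹ ^ (-(ν 0)) : ℂˣ) : ℂ) = ((p ^ (ν 0) : ℂˣ) : ℂ)
    congr 1
    rw [inv_zpow, ← zpow_neg, neg_neg]
  have hmaster : ∀ lam : Fin 2 → ℤ,
      ∑ μ ∈ insert (vv 2 (-1)) (insert (vv (-2) 1) (insert (vv 0 (lam 1))
          (insert (vv 0 (lam 1 - 2)) {vv 0 (lam 1 + 2)}))),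
        φ₁ μ * φ₂ (lam - μ) * (1 - Pz (3 * μ 1 + (lam - μ) 0)) = 0 := by
    intro lam
    set V : Finset (Fin 2 → ℤ) := insert (vv 2 (-1)) (insert (vv (-2) 1) (insert (vv 0 (lam 1))
          (insert (vv 0 (lam 1 - 2)) {vv 0 (lam 1 + 2)}))) with hVdef
    set S : Finset (Fin 2 → ℤ) := φ₁.coeff.support ∪ V with hSdef
    have hsub1 : φ₁.coeff.support ⊆ S := Finset.subset_union_left
    have hsub2 : (zeta (p^3)⁻¹ 1 φ₁).coeff.support ⊆ S := by
      intro μ hμ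
      apply hsub1
      rw [Finsupp.mem_support_iff] at hμ ⊢
      intro h0
      exact hμ (by rw [hz1c, h0, mul_zero])
    have h3' : (φ₁ * φ₂) lam = ((zeta (p^3)⁻¹ 1 φ₁) * (zeta p⁻¹ 0 φ₂)) lam := by rw [h3]
    rw [mul_coeff' φ₁ φ₂ S hsub1 lam, mul_coeff' _ _ S hsub2 lam] at h3'
    have hterm : ∀ μ ∈ S, (zeta (p^3)⁻¹ 1 φ₁) μ * (zeta p⁻¹ 0 φ₂) (lam - μ)
        = Pz (3 * μ 1 + (lam - μ) 0) * (φ₁ μ * φ₂ (lam - μ)) := by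
      intro μ _
      rw [hz1c, hz2c]
      have hmul : Pz (3 * μ 1 + (lam - μ) 0) = Pz (3 * μ 1) * Pz ((lam - μ) 0) := by
        show ((p ^ (3 * μ 1 + (lam - μ) 0) : ℂˣ) : ℂ) = _
        rw [zpow_add, Units.val_mul]
      rw [hmul]; ring
    rw [Finset.sum_congr rfl hterm] at h3'
    have hsum : ∑ μ ∈ S, φ₁ μ * φ₂ (lam - μ) * (1 - Pz (3 * μ 1 + (lam - μ) 0)) = 0 := by
      have hsplit : ∀ μ ∈ S, φ₁ μ * φ₂ (lam - μ) * (1 - Pz (3 * μ 1 + (lam - μ) 0))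
          = φ₁ μ * φ₂ (lam - μ) - Pz (3 * μ 1 + (lam - μ) 0) * (φ₁ μ * φ₂ (lam - μ)) := by
        intro μ _; ring
      rw [Finset.sum_congr rfl hsplit, Finset.sum_sub_distrib, h3', sub_self]
    have hvanish : ∀ μ ∈ S, μ ∉ V →
        φ₁ μ * φ₂ (lam - μ) * (1 - Pz (3 * μ 1 + (lam - μ) 0)) = 0 := by
      intro μ _ hμV
      by_cases h0 : μ 0 = 0
      · have hμ := eq_vv μ
        rw [h0] at hμ
        have hb1 : μ 1 ≠ lam 1 := by
          intro h; exact hμV (by rw [hμ, h]; simp [hVdef])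
        have hb2 : μ 1 ≠ lam 1 - 2 := by
          intro h; exact hμV (by rw [hμ, h]; simp [hVdef])
        have hb3 : μ 1 ≠ lam 1 + 2 := by
          intro h; exact hμV (by rw [hμ, h]; simp [hVdef])
        have hsub : (lam - μ) 1 = lam 1 - μ 1 := rfl
        have hz : φ₂ (lam - μ) = 0 := by
          apply hz2
          · rw [hsub]; omega
          · intro h
            have := congrFun h 1
            rw [hsub] at this
            simp [vv] at this
            omega
          · intro h
            have := congrFun h 1
            rw [hsub] at this
            simp [vv] at this
            omega
        rw [hz]; ring
      · have hm1 : μ ≠ vv 2 (-1) := by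
          intro h; exact hμV (by rw [h]; simp [hVdef])
        have hm2 : μ ≠ vv (-2) 1 := by
          intro h; exact hμV (by rw [h]; simp [hVdef])
        rw [hz1 μ h0 hm1 hm2]; ring
    calc ∑ μ ∈ V, φ₁ μ * φ₂ (lam - μ) * (1 - Pz (3 * μ 1 + (lam - μ) 0))
        = ∑ μ ∈ S, φ₁ μ * φ₂ (lam - μ) * (1 - Pz (3 * μ 1 + (lam - μ) 0)) :=
          Finset.sum_subset Finset.subset_union_right hvanish
      _ = 0 := hsum
  have hE5 : ∀ A B : ℤ,
      φ₁ (vv 2 (-1)) * φ₂ (vv (A-2) (B+1)) * (1 - Pz (A-5))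
      + φ₁ (vv (-2) 1) * φ₂ (vv (A+2) (B-1)) * (1 - Pz (A+5))
      + φ₁ (vv 0 B) * φ₂ (vv A 0) * (1 - Pz (3*B+A))
      + φ₁ (vv 0 (B-2)) * φ₂ (vv A 2) * (1 - Pz (3*B+A-6))
      + φ₁ (vv 0 (B+2)) * φ₂ (vv A (-2)) * (1 - Pz (3*B+A+6)) = 0 := by
    intro A B
    have hm := hmaster (vv A B)
    have hB : (vv A B) 1 = B := rfl
    rw [hB] at hm
    have hd1 : (vv 2 (-1) : Fin 2 → ℤ) ∉ (insert (vv (-2) 1) (insert (vv 0 B)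
        (insert (vv 0 (B - 2)) {vv 0 (B + 2)})) : Finset (Fin 2 → ℤ)) := by
      simp only [Finset.mem_insert, Finset.mem_singleton, vv_eq_iff]
      omega
    have hd2 : (vv (-2) 1 : Fin 2 → ℤ) ∉ (insert (vv 0 B)
        (insert (vv 0 (B - 2)) {vv 0 (B + 2)}) : Finset (Fin 2 → ℤ)) := by
      simp only [Finset.mem_insert, Finset.mem_singleton, vv_eq_iff]
      omega
    have hd3 : (vv 0 B : Fin 2 → ℤ) ∉ (insert (vv 0 (B - 2)) {vv 0 (B + 2)} : Finset (Fin 2 → ℤ)) := by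
      simp only [Finset.mem_insert, Finset.mem_singleton, vv_eq_iff]
      omega
    have hd4 : (vv 0 (B-2) : Fin 2 → ℤ) ∉ ({vv 0 (B + 2)} : Finset (Fin 2 → ℤ)) := by
      simp only [Finset.mem_singleton, vv_eq_iff]
      omega
    rw [Finset.sum_insert hd1, Finset.sum_insert hd2, Finset.sum_insert hd3,
      Finset.sum_insert hd4, Finset.sum_singleton] at hm
    have e1 : vv A B - vv 2 (-1) = vv (A-2) (B+1) := by rw [vv_sub]; norm_num
    have e2 : vv A B - vv (-2) 1 = vv (A+2) (B-1) := by rw [vv_sub]; norm_num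
    have e3 : vv A B - vv 0 B = vv A 0 := by rw [vv_sub]; norm_num
    have e4 : vv A B - vv 0 (B-2) = vv A 2 := by
      rw [vv_sub, show (A:ℤ) - 0 = A from by ring, show (B:ℤ) - (B-2) = 2 from by ring]
    have e5 : vv A B - vv 0 (B+2) = vv A (-2) := by
      rw [vv_sub, show (A:ℤ) - 0 = A from by ring, show (B:ℤ) - (B+2) = -2 from by ring]
    rw [e1, e2, e3, e4, e5] at hm
    have w1 : 3 * (vv 2 (-1)) 1 + (vv (A-2) (B+1)) 0 = A - 5 := by simp [vv]; ring
    have w2 : 3 * (vv (-2) 1) 1 + (vv (A+2) (B-1)) 0 = A + 5 := by simp [vv]; ring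
    have w3 : 3 * (vv 0 B) 1 + (vv A 0) 0 = 3*B+A := by simp [vv]
    have w4 : 3 * (vv 0 (B-2)) 1 + (vv A 2) 0 = 3*B+A-6 := by simp [vv]; ring
    have w5 : 3 * (vv 0 (B+2)) 1 + (vv A (-2)) 0 = 3*B+A+6 := by simp [vv]; ring
    rw [w1, w2, w3, w4, w5] at hm
    linear_combination hm
  -- support transport
  have hTg : ∀ m : ℤ, (fun m => φ₂ (vv m 0)) m ≠ 0 → m ∈ φ₂.coeff.support.image (fun ν => ν 0) := by
    intro m hm
    exact Finset.mem_image.mpr ⟨vv m 0, Finsupp.mem_support_iff.mpr hm, rfl⟩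
  have hTf : ∀ k : ℤ, (fun k => φ₁ (vv 0 k)) k ≠ 0 → k ∈ φ₁.coeff.support.image (fun μ => μ 1) := by
    intro k hk
    exact Finset.mem_image.mpr ⟨vv 0 k, Finsupp.mem_support_iff.mpr hk, rfl⟩
  by_cases hf1 : φ₁ (vv 0 1) = 0
  · -- case f 1 = 0
    have hg : ∀ m : ℤ, m ≠ 1 → m ≠ -1 → m ≠ 5 → m ≠ -3 → φ₂ (vv m 0) = 0 := by
      intro m hm1 hm2 hm3 hm4
      have h5 := hE5 (m-2) 1
      have z1 : φ₂ (vv (m-2-2) (1+1)) = 0 := hEv2 _ _ (by norm_num) (by omega) (by omega)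
      have z4 : φ₂ (vv (m-2) 2) = 0 := hEv2 _ _ (by norm_num) (by omega) (by omega)
      have z5 : φ₂ (vv (m-2) (-2)) = 0 := hEv2 _ _ (by norm_num) (by omega) (by omega)
      rw [z1, z4, z5, hf1, show (m:ℤ)-2+2 = m from by ring, show ((1:ℤ)-1) = 0 from by ring,
        show (m:ℤ)-2+5 = m+3 from by ring] at h5
      by_contra hne
      exact (mul_ne_zero (mul_ne_zero hβ hne) (hEn (m+3) (by omega))) (by linear_combination h5)
    have hg7 : φ₂ (vv 7 0) = 0 := hg 7 (by norm_num) (by norm_num) (by norm_num) (by norm_num)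
    have hg5 : φ₂ (vv 5 0) = 0 := by
      have h5 := hE5 7 (-1)
      norm_num at h5
      rw [hg7, hf1] at h5
      have z2 : φ₂ (vv 9 (-2)) = 0 := hEv2 _ _ (by norm_num) (by omega) (by omega)
      have z4 : φ₂ (vv 7 2) = 0 := hEv2 _ _ (by norm_num) (by omega) (by omega)
      rw [z2, z4] at h5
      by_contra hne
      exact (mul_ne_zero (mul_ne_zero hα hne) (hEn 2 (by omega))) (by linear_combination h5)
    have hg1 : φ₂ (vv 1 0) = 0 := by
      have h5 := hE5 3 (-1)
      norm_num at h5
      rw [hf1, hPz0] at h5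
      have z2 : φ₂ (vv 5 (-2)) = 0 := hEv2 _ _ (by norm_num) (by omega) (by omega)
      have z4 : φ₂ (vv 3 2) = 0 := hEv2 _ _ (by norm_num) (by omega) (by omega)
      rw [z2, z4] at h5
      by_contra hne
      exact (mul_ne_zero (mul_ne_zero hα hne) (hEn (-2) (by omega))) (by linear_combination h5)
    have h5 := hE5 (-1) 1
    norm_num at h5
    rw [hf1, hg1] at h5
    have z4 : φ₂ (vv (-1) 2) = 0 := hEv2 _ _ (by norm_num) (by omega) (by omega)
    have z5 : φ₂ (vv (-1) (-2)) = 0 := hEv2 _ _ (by norm_num) (by omega) (by omega)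
    rw [z4, z5] at h5
    exact (mul_ne_zero (mul_ne_zero hα hγ) (hEn (-6) (by omega))) (by linear_combination h5)
  · -- case f 1 ≠ 0
    have hg4 : ∀ m : ℤ, 4 ≤ m → φ₂ (vv m 0) = 0 := by
      by_contra hcon
      push_neg at hcon
      obtain ⟨m0, hm0, h0⟩ := hcon
      obtain ⟨M, hM4, hMne, hMtop⟩ := exists_max_aux (fun m => φ₂ (vv m 0))
        (φ₂.coeff.support.image (fun ν => ν 0)) hTg 4 m0 hm0 h0
      have h5 := hE5 M 1
      have z1 : φ₂ (vv (M-2) (1+1)) = 0 := hEv2 _ _ (by norm_num) (by omega) (by omega)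
      have z2 : φ₂ (vv (M+2) (1-1)) = 0 := by
        rw [show ((1:ℤ)-1) = 0 from by ring]
        exact hMtop (M+2) (by omega)
      have z4 : φ₂ (vv M 2) = 0 := hEv2 _ _ (by norm_num) (by omega) (by omega)
      have z5 : φ₂ (vv M (-2)) = 0 := hEv2 _ _ (by norm_num) (by omega) (by omega)
      rw [z1, z2, z4, z5, show (3:ℤ)*1+M = M+3 from by ring] at h5
      exact (mul_ne_zero (mul_ne_zero hf1 hMne) (hEn (M+3) (by omega))) (by linear_combination h5)
    have hf2 : ∀ k : ℤ, 2 ≤ k → φ₁ (vv 0 k) = 0 := by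
      by_contra hcon
      push_neg at hcon
      obtain ⟨k0, hk0, h0⟩ := hcon
      obtain ⟨K, hK2, hKne, hKtop⟩ := exists_max_aux (fun k => φ₁ (vv 0 k))
        (φ₁.coeff.support.image (fun μ => μ 1)) hTf 2 k0 hk0 h0
      have hg3 : φ₂ (vv 3 0) = 0 := by
        have h5 := hE5 3 K
        have z1 : φ₂ (vv (3-2) (K+1)) = 0 := hEv2 _ _ (by omega) (by omega) (by omega)
        have z2 : φ₂ (vv (3+2) (K-1)) = 0 := hEv2 _ _ (by omega) (by omega) (by omega)
        have z4 : φ₂ (vv 3 2) = 0 := hEv2 _ _ (by norm_num) (by omega) (by omega)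
        have z5 : φ₁ (vv 0 (K+2)) = 0 := hKtop (K+2) (by omega)
        rw [z1, z2, z4, z5] at h5
        by_contra hne
        exact (mul_ne_zero (mul_ne_zero hKne hne) (hEn (3*K+3) (by omega)))
          (by linear_combination h5)
      have h6 := hE5 3 (K-2)
      have z1 : φ₂ (vv (3-2) (K-2+1)) = 0 := hEv2 _ _ (by omega) (by omega) (by omega)
      have z2 : φ₂ (vv (3+2) (K-2-1)) = 0 := by
        by_cases hK3 : K = 3
        · rw [hK3, show ((3:ℤ)-2-1) = 0 from by ring, show ((3:ℤ)+2) = 5 from by ring]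
          exact hg4 5 (by norm_num)
        · exact hEv2 _ _ (by omega) (by omega) (by omega)
      have z4 : φ₂ (vv 3 2) = 0 := hEv2 _ _ (by norm_num) (by omega) (by omega)
      rw [z1, z2, z4, hg3, show (K:ℤ)-2+2 = K from by ring,
        show (3:ℤ)*(K-2)+3+6 = 3*K+3 from by ring] at h6
      exact (mul_ne_zero (mul_ne_zero hKne hδ) (hEn (3*K+3) (by omega)))
        (by linear_combination h6)
    have hg3 : φ₂ (vv 3 0) = 0 := by
      have h5 := hE5 3 1
      norm_num at h5
      have z1 : φ₂ (vv 1 2) = 0 := hEv2 _ _ (by norm_num) (by omega) (by omega)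
      have z2 : φ₂ (vv 5 0) = 0 := hg4 5 (by norm_num)
      have z4 : φ₂ (vv 3 2) = 0 := hEv2 _ _ (by norm_num) (by omega) (by omega)
      have z5 : φ₁ (vv 0 3) = 0 := hf2 3 (by norm_num)
      rw [z1, z2, z4, z5] at h5
      by_contra hne
      exact (mul_ne_zero (mul_ne_zero hf1 hne) (hEn 6 (by omega))) (by linear_combination h5)
    have hg1 : φ₂ (vv 1 0) = 0 := by
      have h5 := hE5 1 1
      norm_num at h5
      have z1 : φ₂ (vv (-1) 2) = 0 := hEv2 _ _ (by norm_num) (by omega) (by omega)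
      have z4 : φ₂ (vv 1 2) = 0 := hEv2 _ _ (by norm_num) (by omega) (by omega)
      have z5 : φ₁ (vv 0 3) = 0 := hf2 3 (by norm_num)
      rw [z1, z4, z5, hg3] at h5
      by_contra hne
      exact (mul_ne_zero (mul_ne_zero hf1 hne) (hEn 4 (by omega))) (by linear_combination h5)
    have h5 := hE5 3 (-1)
    norm_num at h5
    have z2 : φ₂ (vv 5 (-2)) = 0 := hEv2 _ _ (by norm_num) (by omega) (by omega)
    have z4 : φ₂ (vv 3 2) = 0 := hEv2 _ _ (by norm_num) (by omega) (by omega)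
    rw [z2, z4, hg1, hg3] at h5
    exact (mul_ne_zero (mul_ne_zero hf1 hδ) (hEn 6 (by omega))) (by linear_combination h5)




end
end
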